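/- arXiv:1303.4536 — 3 statements merged into one kernel-verified Lean document; each statement's English description precedes it below -/
import Mathlib

section
/- The array F' is a magic square of order n: the values F'(r,c) for r,c ∈ {1,…,n} are exactly the numbers 1, 2, …, n² each occurring once, and every row sum, every column sum, and both main diagonal sums equal n(n²+1)/2. -/
/-- Base array of the singly-even construction on rows `1 ≤ r ≤ n-2`, columns `1 ≤ c ≤ n`:
for `1 ≤ k ≤ n/2 - 1`, if `k` is odd then `B' r k = (k-1)(n-2) + r` and
`B' r (n+1-k) = 2p - k(n-2) + r`; if `k` is even then `B' r k = k(n-2) + 1 - r` and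
`B' r (n+1-k) = 2p - (k-1)(n-2) + 1 - r`; and for `k = m = n/2`,
`B' r m = (m-1)(n-2) + r` and `B' r (m+1) = 2p - (m-1)(n-2) + 1 - r`, where `p = n²/2`. -/
def B' (n r c : ℕ) : ℕ :=
  if c ≤ n / 2 - 1 then
    if Odd c then (c - 1) * (n - 2) + r else c * (n - 2) + 1 - r
  else if c = n / 2 then (n / 2 - 1) * (n - 2) + r
  else if c = n / 2 + 1 then 2 * (n ^ 2 / 2) - (n / 2 - 1) * (n - 2) + 1 - r
  else
    if Odd (n + 1 - c) then 2 * (n ^ 2 / 2) - (n + 1 - c) * (n - 2) + r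
    else 2 * (n ^ 2 / 2) - (n + 1 - c - 1) * (n - 2) + 1 - r

/-- The set of rows to be swapped:
`S' = {r : r even, r ≤ (n-2)/2} ∪ {r : r odd, (n-2)/2 < r ≤ n-3}`. -/
def S' (n r : ℕ) : Prop :=
  (Even r ∧ r ≤ (n - 2) / 2) ∨ (Odd r ∧ (n - 2) / 2 < r ∧ r ≤ n - 3)

instance (n r : ℕ) : Decidable (S' n r) := by unfold S'; infer_instance

/-- The inner array: `G r c = B' r (n+1-c)` if `r ∈ S'`, and `G r c = B' r c` otherwise. -/
def G (n r c : ℕ) : ℕ := if S' n r then B' n r (n + 1 - c) else B' n r c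

/-- The first row of the singly-even construction, with `p = n²/2` and `m = n/2`:
`R₁ 1 = p+1`, `R₁ n = p+2`, `R₁ (m+2) = p+n-m`, `R₁ (m+3) = p+n-m-1`;
for `2 ≤ j ≤ m+1`, `R₁ j = p-n+j-1` if `j` even and `R₁ j = p+n+2-j` if `j` odd;
for `m+4 ≤ j ≤ n-1`, `R₁ j = p-n+j-1` if `j` odd and `R₁ j = p+n+2-j` if `j` even. -/
def R1 (n j : ℕ) : ℕ :=
  if j = 1 then n ^ 2 / 2 + 1
  else if j = n then n ^ 2 / 2 + 2
  else if j = n / 2 + 2 then n ^ 2 / 2 + n - n / 2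
  else if j = n / 2 + 3 then n ^ 2 / 2 + n - n / 2 - 1
  else if j ≤ n / 2 + 1 then
    if Even j then n ^ 2 / 2 - n + j - 1 else n ^ 2 / 2 + n + 2 - j
  else
    if Odd j then n ^ 2 / 2 - n + j - 1 else n ^ 2 / 2 + n + 2 - j

/-- The last row: `Rₙ j = n² + 1 - R₁ j`. -/
def Rn (n j : ℕ) : ℕ := n ^ 2 + 1 - R1 n j

/-- The complete singly-even array: first row `R₁`, last row `Rₙ`,
and `F' r c = G (r-1) c` for `2 ≤ r ≤ n-1`. -/
def F' (n r c : ℕ) : ℕ :=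
  if r = 1 then R1 n c else if r = n then Rn n c else G n (r - 1) c

-- sum library
section SumLib
open Finset

lemma sum_pair (f : ℕ → ℤ) (N : ℕ) :
    ∑ i ∈ range (2*N), f i = ∑ j ∈ range N, (f (2*j) + f (2*j+1)) := by
  induction N with
  | zero => simp
  | succ N ih =>
    have h : 2*(N+1) = 2*N + 1 + 1 := by ring
    rw [h, sum_range_succ, sum_range_succ, ih, sum_range_succ]
    rw [add_assoc]

lemma sum_linear (u v : ℤ) (N : ℕ) :
    2 * ∑ i ∈ range N, (u + v * i) = N * (2*u + v*(N-1)) := by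
  induction N with
  | zero => simp
  | succ N ih =>
    rw [sum_range_succ, mul_add, ih]
    push_cast
    ring

lemma sum_Icc_to_range (f : ℕ → ℤ) (a b : ℕ) :
    ∑ i ∈ Finset.Icc a b, f i = ∑ i ∈ range (b+1-a), f (a+i) := by
  rw [← Finset.Ico_add_one_right_eq_Icc, Finset.sum_Ico_eq_sum_range]

end SumLib
section Beval

-- B' evaluation lemmas, n = 4*b+10
lemma B'_left_odd (b r c : ℕ) (hc1 : 1 ≤ c) (hc : c ≤ 2*b+5) (hco : c % 2 = 1) :
    (B' (4*b+10) r c : ℤ) = ((c:ℤ)-1)*(4*b+8) + r := by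
  have hm : (4*b+10)/2 = 2*b+5 := by omega
  unfold B'
  rcases Nat.lt_or_ge c (2*b+5) with h | h
  · rw [if_pos (by omega), if_pos (Nat.odd_iff.2 hco)]
    have h1 : 1 ≤ c := hc1
    push_cast [h1]
    ring
  · have hc' : c = 2*b+5 := by omega
    rw [if_neg (by omega), if_pos (by omega)]
    rw [hm, hc']
    push_cast
    ring

lemma B'_left_even (b r c : ℕ) (hc1 : 1 ≤ c) (hc : c ≤ 2*b+4) (hce : c % 2 = 0) (hr : r ≤ 4*b+9) :
    (B' (4*b+10) r c : ℤ) = (c:ℤ)*(4*b+8) + 1 - r := by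
  have hm : (4*b+10)/2 = 2*b+5 := by omega
  unfold B'
  rw [if_pos (by omega), if_neg (by simp [Nat.odd_iff, hce])]
  have h2 : 4*b+10-2 = 4*b+8 := by omega
  rw [h2]
  have hb : r ≤ c*(4*b+8) + 1 := by
    have h0 : 1*(4*b+8) ≤ c*(4*b+8) := Nat.mul_le_mul_right _ hc1
    omega
  push_cast [hb]
  ring

lemma B'_mid_right (b r : ℕ) (hr : r ≤ 4*b+9) :
    (B' (4*b+10) r (2*b+6) : ℤ) = 8*(b:ℤ)^2+48*b+69 - r := by
  have hm : (4*b+10)/2 = 2*b+5 := by omega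
  have hsq : (4*b+10)^2 = 16*b^2+80*b+100 := by ring
  have hp2 : 2*((4*b+10)^2/2) = 16*b^2+80*b+100 := by omega
  unfold B'
  rw [if_neg (by omega), if_neg (by omega), if_pos (by omega), hm]
  have h2 : 4*b+10-2 = 4*b+8 := by omega
  have h3 : (2*b+5-1) = 2*b+4 := by omega
  rw [h2, hp2, h3]
  have he : (2*b+4)*(4*b+8) = 8*b^2+32*b+32 := by ring
  rw [he]
  have hE : 16*b^2+80*b+100 - (8*b^2+32*b+32) + 1 - r = 8*b^2+48*b+69 - r := by omega
  rw [hE]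
  have hb2 : r ≤ 8*b^2+48*b+69 := by omega
  push_cast [hb2]
  ring

lemma B'_right_odd (b r c k : ℕ) (hk : c + k = 4*b+11) (hk1 : 1 ≤ k) (hk2 : k ≤ 2*b+4)
    (hko : k % 2 = 1) :
    (B' (4*b+10) r c : ℤ) = 16*(b:ℤ)^2+80*b+100 - k*(4*b+8) + r := by
  have hm : (4*b+10)/2 = 2*b+5 := by omega
  have hsq : (4*b+10)^2 = 16*b^2+80*b+100 := by ring
  have hp2 : 2*((4*b+10)^2/2) = 16*b^2+80*b+100 := by omega
  unfold B'
  rw [if_neg (by omega), if_neg (by omega), if_neg (by omega)]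
  have hk' : 4*b+10+1-c = k := by omega
  have h2 : 4*b+10-2 = 4*b+8 := by omega
  rw [hk', h2, if_pos (Nat.odd_iff.2 hko), hp2]
  have hb : k*(4*b+8) ≤ 16*b^2+80*b+100 := by
    have h1 : k*(4*b+8) ≤ (2*b+4)*(4*b+8) := Nat.mul_le_mul_right _ hk2
    have h3 : (2*b+4)*(4*b+8) = 8*b^2+32*b+32 := by ring
    omega
  push_cast [hb]
  ring

lemma B'_right_even (b r c k : ℕ) (hk : c + k = 4*b+11) (hk1 : 2 ≤ k) (hk2 : k ≤ 2*b+4)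
    (hke : k % 2 = 0) (hr : r ≤ 4*b+9) :
    (B' (4*b+10) r c : ℤ) = 16*(b:ℤ)^2+80*b+100 - (k-1)*(4*b+8) + 1 - r := by
  have hm : (4*b+10)/2 = 2*b+5 := by omega
  have hsq : (4*b+10)^2 = 16*b^2+80*b+100 := by ring
  have hp2 : 2*((4*b+10)^2/2) = 16*b^2+80*b+100 := by omega
  unfold B'
  rw [if_neg (by omega), if_neg (by omega), if_neg (by omega)]
  have hk' : 4*b+10+1-c = k := by omega
  have h2 : 4*b+10-2 = 4*b+8 := by omega
  rw [hk', h2, if_neg (by simp [Nat.odd_iff, hke]), hp2]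
  have hb : (k-1)*(4*b+8) ≤ 16*b^2+80*b+100 ∧ r ≤ 16*b^2+80*b+100 - (k-1)*(4*b+8) + 1 := by
    have h1 : (k-1)*(4*b+8) ≤ (2*b+3)*(4*b+8) := Nat.mul_le_mul_right _ (by omega)
    have h3 : (2*b+3)*(4*b+8) = 8*b^2+28*b+24 := by ring
    omega
  have hk1' : (1:ℕ) ≤ k := by omega
  push_cast [hb.1, hb.2, hk1']
  ring

end Beval
section Reval

lemma S'_iff (b r : ℕ) : S' (4*b+10) r ↔ ((r % 2 = 0 ∧ r ≤ 2*b+4) ∨ (r % 2 = 1 ∧ 2*b+4 < r ∧ r ≤ 4*b+7)) := by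
  unfold S'
  rw [Nat.even_iff, Nat.odd_iff]
  constructor <;> (intro h; omega)

lemma cast_sq (b : ℕ) : ((b:ℤ))^2 = ((b^2 : ℕ) : ℤ) := by push_cast; ring

lemma R1_eval (b j : ℕ) (h1 : 1 ≤ j) (h2 : j ≤ 4*b+10) :
    (R1 (4*b+10) j : ℤ) =
      if j = 1 then 8*(b:ℤ)^2+40*b+51
      else if j = 4*b+10 then 8*(b:ℤ)^2+40*b+52
      else if j = 2*b+7 then 8*(b:ℤ)^2+42*b+55
      else if j = 2*b+8 then 8*(b:ℤ)^2+42*b+54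
      else if (j ≤ 2*b+6 ∧ j % 2 = 0) ∨ (2*b+9 ≤ j ∧ j % 2 = 1) then 8*(b:ℤ)^2+36*b+39+j
      else 8*(b:ℤ)^2+44*b+62-j := by
  have hsq : (4*b+10)^2 = 16*b^2+80*b+100 := by ring
  have hc := cast_sq b
  unfold R1
  have hm : (4*b+10)/2 = 2*b+5 := by omega
  rw [hm]
  by_cases e1 : j = 1
  · rw [if_pos e1, if_pos e1]; omega
  rw [if_neg e1, if_neg e1]
  by_cases e2 : j = 4*b+10
  · rw [if_pos e2, if_pos e2]; omega
  rw [if_neg e2, if_neg e2]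
  by_cases e3 : j = 2*b+7
  · rw [if_pos e3, if_pos e3]; omega
  rw [if_neg e3, if_neg e3]
  by_cases e4 : j = 2*b+8
  · rw [if_pos e4, if_pos e4]; omega
  rw [if_neg e4, if_neg e4]
  by_cases e5 : j ≤ 2*b+6
  · rw [if_pos e5]
    by_cases e6 : j % 2 = 0
    · rw [if_pos (Nat.even_iff.2 e6), if_pos (by omega)]; omega
    · rw [if_neg (by rw [Nat.even_iff]; omega), if_neg (by omega)]; omega
  · rw [if_neg e5]
    by_cases e6 : j % 2 = 1
    · rw [if_pos (Nat.odd_iff.2 e6), if_pos (by omega)]; omega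
    · rw [if_neg (by rw [Nat.odd_iff]; omega), if_neg (by omega)]; omega

lemma R1_le (b j : ℕ) (h1 : 1 ≤ j) (h2 : j ≤ 4*b+10) :
    8*b^2+36*b+40 ≤ R1 (4*b+10) j ∧ R1 (4*b+10) j ≤ 8*b^2+44*b+60 := by
  have h := R1_eval b j h1 h2
  have hc := cast_sq b
  split_ifs at h <;> omega

lemma Rn_eval (b j : ℕ) (h1 : 1 ≤ j) (h2 : j ≤ 4*b+10) :
    (Rn (4*b+10) j : ℤ) = 16*(b:ℤ)^2+80*b+101 - R1 (4*b+10) j := by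
  unfold Rn
  have hsq : (4*b+10)^2 = 16*b^2+80*b+100 := by ring
  have hc := cast_sq b
  have hle := (R1_le b j h1 h2).2
  omega

end Reval
section Geval
open Finset

lemma sum_pairs (f : ℕ → ℤ) (N : ℕ) :
    ∑ x ∈ Finset.Icc 1 (2*N), f x = ∑ j ∈ range N, (f (2*j+1) + f (2*j+2)) := by
  rw [sum_Icc_to_range]
  have h : 2*N+1-1 = 2*N := by omega
  rw [h, sum_pair]
  apply Finset.sum_congr rfl
  intro j _
  have e1 : 1+2*j = 2*j+1 := by omega
  have e2 : 1+(2*j+1) = 2*j+2 := by omega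
  rw [e1, e2]

lemma G_swap (b r c : ℕ) (hS : (r % 2 = 0 ∧ r ≤ 2*b+4) ∨ (r % 2 = 1 ∧ 2*b+4 < r ∧ r ≤ 4*b+7))
    (hc : c ≤ 4*b+10) :
    G (4*b+10) r c = B' (4*b+10) r (4*b+11-c) := by
  unfold G
  rw [if_pos ((S'_iff b r).2 hS)]

lemma G_stay (b r c : ℕ)
    (hS : ¬ ((r % 2 = 0 ∧ r ≤ 2*b+4) ∨ (r % 2 = 1 ∧ 2*b+4 < r ∧ r ≤ 4*b+7))) :
    G (4*b+10) r c = B' (4*b+10) r c := by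
  unfold G
  rw [if_neg (fun h => hS ((S'_iff b r).1 h))]

end Geval
section SumLib2
open Finset
lemma sum_pairs' (f : ℕ → ℤ) (M N : ℕ) (h : M = 2*N) :
    ∑ x ∈ Finset.Icc 1 M, f x = ∑ j ∈ range N, (f (2*j+1) + f (2*j+2)) := by
  subst h; exact sum_pairs f N

lemma split3' (f : ℕ → ℤ) (N p q s : ℕ) (h : N = p+q+s) :
    ∑ j ∈ range N, f j = ∑ j ∈ range p, f j + ∑ j ∈ range q, f (p+j)
      + ∑ j ∈ range s, f (p+q+j) := by
  subst h
  rw [show p+q+s = (p+q)+s from rfl, Finset.sum_range_add, Finset.sum_range_add]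
end SumLib2
section SumLib3
open Finset
lemma split2' (f : ℕ → ℤ) (N p q : ℕ) (h : N = p+q) :
    ∑ j ∈ range N, f j = ∑ j ∈ range p, f j + ∑ j ∈ range q, f (p+j) := by
  subst h; exact Finset.sum_range_add f p q
end SumLib3
section RowSum
open Finset

lemma row_pair_left (b r j : ℕ) (hj : j ≤ b+1) (hr1 : 1 ≤ r) (hr : r ≤ 4*b+8) :
    (B' (4*b+10) r (2*j+1) : ℤ) + (B' (4*b+10) r (2*j+2) : ℤ) = (8*(b:ℤ)+17) + (16*b+32)*j := by
  rw [B'_left_odd b r (2*j+1) (by omega) (by omega) (by omega),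
      B'_left_even b r (2*j+2) (by omega) (by omega) (by omega) (by omega)]
  push_cast
  ring

lemma row_pair_mid (b r : ℕ) (hr1 : 1 ≤ r) (hr : r ≤ 4*b+8) :
    (B' (4*b+10) r (2*b+5) : ℤ) + (B' (4*b+10) r (2*b+6) : ℤ) = 16*(b:ℤ)^2+80*b+101 := by
  rw [B'_left_odd b r (2*b+5) (by omega) (by omega) (by omega), B'_mid_right b r (by omega)]
  push_cast
  ring

lemma row_pair_right (b r j : ℕ) (hj : j ≤ b+1) (hr1 : 1 ≤ r) (hr : r ≤ 4*b+8) :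
    (B' (4*b+10) r (2*b+7+2*j) : ℤ) + (B' (4*b+10) r (2*b+8+2*j) : ℤ)
      = (16*(b:ℤ)^2+104*b+153) + (16*b+32)*j := by
  rw [B'_right_even b r (2*b+7+2*j) (2*b+4-2*j) (by omega) (by omega) (by omega) (by omega) (by omega),
      B'_right_odd b r (2*b+8+2*j) (2*b+3-2*j) (by omega) (by omega) (by omega) (by omega)]
  have e1 : ((2*b+4-2*j : ℕ) : ℤ) = 2*b+4-2*j := by omega
  have e2 : ((2*b+3-2*j : ℕ) : ℤ) = 2*b+3-2*j := by omega
  rw [e1, e2]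
  ring

lemma B'_row_sum (b r : ℕ) (h1 : 1 ≤ r) (h2 : r ≤ 4*b+8) :
    ∑ c ∈ Finset.Icc 1 (4*b+10), (B' (4*b+10) r c : ℤ)
      = (2*b+5)*(16*(b:ℤ)^2+80*b+101) := by
  rw [sum_pairs' _ _ (2*b+5) (by omega)]
  rw [split3' _ _ (b+2) 1 (b+2) (by omega)]
  rw [Finset.sum_range_one]
  have hA : ∑ j ∈ range (b+2),
      ((B' (4*b+10) r (2*j+1) : ℤ) + (B' (4*b+10) r (2*j+2) : ℤ))
      = ∑ j ∈ range (b+2), ((8*(b:ℤ)+17) + (16*b+32)*j) :=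
    Finset.sum_congr rfl fun j hj =>
      row_pair_left b r j (by have := mem_range.1 hj; omega) h1 h2
  have hB : (B' (4*b+10) r (2*(b+2+0)+1) : ℤ) + (B' (4*b+10) r (2*(b+2+0)+2) : ℤ)
      = 16*(b:ℤ)^2+80*b+101 := by
    have e1 : 2*(b+2+0)+1 = 2*b+5 := by omega
    have e2 : 2*(b+2+0)+2 = 2*b+6 := by omega
    rw [e1, e2]
    exact row_pair_mid b r h1 h2
  have hC : ∑ j ∈ range (b+2),
      ((B' (4*b+10) r (2*(b+2+1+j)+1) : ℤ) + (B' (4*b+10) r (2*(b+2+1+j)+2) : ℤ))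
      = ∑ j ∈ range (b+2), ((16*(b:ℤ)^2+104*b+153) + (16*b+32)*j) := by
    apply Finset.sum_congr rfl
    intro j hj
    have e1 : 2*(b+2+1+j)+1 = 2*b+7+2*j := by omega
    have e2 : 2*(b+2+1+j)+2 = 2*b+8+2*j := by omega
    rw [e1, e2]
    exact row_pair_right b r j (by have := mem_range.1 hj; omega) h1 h2
  rw [hA, hB, hC]
  have gA := sum_linear (8*(b:ℤ)+17) (16*b+32) (b+2)
  have gC := sum_linear (16*(b:ℤ)^2+104*b+153) (16*b+32) (b+2)
  push_cast at gA gC ⊢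
  linarith [gA, gC]

lemma inner_row_sum (b r : ℕ) (h1 : 1 ≤ r) (h2 : r ≤ 4*b+8) :
    ∑ c ∈ Finset.Icc 1 (4*b+10), (G (4*b+10) r c : ℤ)
      = (2*b+5)*(16*(b:ℤ)^2+80*b+101) := by
  have hrow := B'_row_sum b r h1 h2
  by_cases hS : S' (4*b+10) r
  · simp only [G, if_pos hS]
    rw [sum_Icc_to_range] at hrow ⊢
    rw [← hrow, ← Finset.sum_range_reflect (fun x => (B' (4*b+10) r (1+x) : ℤ)) _]
    apply Finset.sum_congr rfl
    intro i hi
    have hi' := mem_range.1 hi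
    congr 2
    omega
  · simp only [G, if_neg hS]
    exact hrow

end RowSum
section ColSum
open Finset

-- pair of rows (2j+1, 2j+2) in column c of G
lemma col_pair_A (b c j : ℕ) (hc1 : c % 2 = 1) (hc2 : c ≤ 2*b+3) (hj : j ≤ 2*b+3) :
    (G (4*b+10) (2*j+1) c : ℤ) + (G (4*b+10) (2*j+2) c : ℤ)
      = 16*(b:ℤ)^2+76*b+95+4*j := by
  by_cases hjb : j ≤ b+1
  · rw [G_stay b (2*j+1) c (by omega), G_swap b (2*j+2) c (by omega) (by omega)]
    rw [B'_left_odd b (2*j+1) c (by omega) (by omega) hc1,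
        B'_right_odd b (2*j+2) (4*b+11-c) c (by omega) (by omega) (by omega) hc1]
    push_cast
    ring
  · rw [G_swap b (2*j+1) c (by omega) (by omega), G_stay b (2*j+2) c (by omega)]
    rw [B'_right_odd b (2*j+1) (4*b+11-c) c (by omega) (by omega) (by omega) hc1,
        B'_left_odd b (2*j+2) c (by omega) (by omega) hc1]
    push_cast
    ring

lemma col_pair_B (b c j : ℕ) (hc1 : c % 2 = 0) (hc0 : 1 ≤ c) (hc2 : c ≤ 2*b+4) (hj : j ≤ 2*b+3) :
    (G (4*b+10) (2*j+1) c : ℤ) + (G (4*b+10) (2*j+2) c : ℤ)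
      = 16*(b:ℤ)^2+84*b+107-4*j := by
  by_cases hjb : j ≤ b+1
  · rw [G_stay b (2*j+1) c (by omega), G_swap b (2*j+2) c (by omega) (by omega)]
    rw [B'_left_even b (2*j+1) c hc0 hc2 hc1 (by omega),
        B'_right_even b (2*j+2) (4*b+11-c) c (by omega) (by omega) (by omega) hc1 (by omega)]
    push_cast
    ring
  · rw [G_swap b (2*j+1) c (by omega) (by omega), G_stay b (2*j+2) c (by omega)]
    rw [B'_right_even b (2*j+1) (4*b+11-c) c (by omega) (by omega) (by omega) hc1 (by omega),
        B'_left_even b (2*j+2) c hc0 hc2 hc1 (by omega)]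
    push_cast
    ring

lemma col_pair_C (b j : ℕ) (hj : j ≤ 2*b+3) :
    (G (4*b+10) (2*j+1) (2*b+5) : ℤ) + (G (4*b+10) (2*j+2) (2*b+5) : ℤ)
      = if j ≤ b+1 then 16*(b:ℤ)^2+80*b+100 else 16*(b:ℤ)^2+80*b+102 := by
  by_cases hjb : j ≤ b+1
  · rw [if_pos hjb, G_stay b (2*j+1) _ (by omega), G_swap b (2*j+2) _ (by omega) (by omega)]
    have e : 4*b+11-(2*b+5) = 2*b+6 := by omega
    rw [e, B'_left_odd b (2*j+1) (2*b+5) (by omega) (by omega) (by omega),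
        B'_mid_right b (2*j+2) (by omega)]
    push_cast
    ring
  · rw [if_neg hjb, G_swap b (2*j+1) _ (by omega) (by omega), G_stay b (2*j+2) _ (by omega)]
    have e : 4*b+11-(2*b+5) = 2*b+6 := by omega
    rw [e, B'_mid_right b (2*j+1) (by omega),
        B'_left_odd b (2*j+2) (2*b+5) (by omega) (by omega) (by omega)]
    push_cast
    ring

lemma col_pair_D (b j : ℕ) (hj : j ≤ 2*b+3) :
    (G (4*b+10) (2*j+1) (2*b+6) : ℤ) + (G (4*b+10) (2*j+2) (2*b+6) : ℤ)
      = if j ≤ b+1 then 16*(b:ℤ)^2+80*b+102 else 16*(b:ℤ)^2+80*b+100 := by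
  have e : 4*b+11-(2*b+6) = 2*b+5 := by omega
  by_cases hjb : j ≤ b+1
  · rw [if_pos hjb, G_stay b (2*j+1) _ (by omega), G_swap b (2*j+2) _ (by omega) (by omega)]
    rw [e, B'_mid_right b (2*j+1) (by omega),
        B'_left_odd b (2*j+2) (2*b+5) (by omega) (by omega) (by omega)]
    push_cast
    ring
  · rw [if_neg hjb, G_swap b (2*j+1) _ (by omega) (by omega), G_stay b (2*j+2) _ (by omega)]
    rw [e, B'_left_odd b (2*j+1) (2*b+5) (by omega) (by omega) (by omega),
        B'_mid_right b (2*j+2) (by omega)]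
    push_cast
    ring

lemma col_pair_E (b c j : ℕ) (hc1 : c % 2 = 0) (hc2 : 2*b+8 ≤ c) (hc3 : c ≤ 4*b+10)
    (hj : j ≤ 2*b+3) :
    (G (4*b+10) (2*j+1) c : ℤ) + (G (4*b+10) (2*j+2) c : ℤ)
      = 16*(b:ℤ)^2+76*b+95+4*j := by
  have e : ((4*b+11-c : ℕ) : ℤ) = 4*b+11-c := by omega
  by_cases hjb : j ≤ b+1
  · rw [G_stay b (2*j+1) c (by omega), G_swap b (2*j+2) c (by omega) (by omega)]
    rw [B'_right_odd b (2*j+1) c (4*b+11-c) (by omega) (by omega) (by omega) (by omega),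
        B'_left_odd b (2*j+2) (4*b+11-c) (by omega) (by omega) (by omega)]
    rw [e]
    push_cast
    ring
  · rw [G_swap b (2*j+1) c (by omega) (by omega), G_stay b (2*j+2) c (by omega)]
    rw [B'_left_odd b (2*j+1) (4*b+11-c) (by omega) (by omega) (by omega),
        B'_right_odd b (2*j+2) c (4*b+11-c) (by omega) (by omega) (by omega) (by omega)]
    rw [e]
    push_cast
    ring

lemma col_pair_F (b c j : ℕ) (hc1 : c % 2 = 1) (hc2 : 2*b+7 ≤ c) (hc3 : c ≤ 4*b+10)
    (hj : j ≤ 2*b+3) :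
    (G (4*b+10) (2*j+1) c : ℤ) + (G (4*b+10) (2*j+2) c : ℤ)
      = 16*(b:ℤ)^2+84*b+107-4*j := by
  have e : ((4*b+11-c : ℕ) : ℤ) = 4*b+11-c := by omega
  by_cases hjb : j ≤ b+1
  · rw [G_stay b (2*j+1) c (by omega), G_swap b (2*j+2) c (by omega) (by omega)]
    rw [B'_right_even b (2*j+1) c (4*b+11-c) (by omega) (by omega) (by omega) (by omega) (by omega),
        B'_left_even b (2*j+2) (4*b+11-c) (by omega) (by omega) (by omega) (by omega)]
    rw [e]
    push_cast
    ring
  · rw [G_swap b (2*j+1) c (by omega) (by omega), G_stay b (2*j+2) c (by omega)]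
    rw [B'_left_even b (2*j+1) (4*b+11-c) (by omega) (by omega) (by omega) (by omega),
        B'_right_even b (2*j+2) c (4*b+11-c) (by omega) (by omega) (by omega) (by omega) (by omega)]
    rw [e]
    push_cast
    ring

lemma inner_col_sum (b c : ℕ) (h1 : 1 ≤ c) (h2 : c ≤ 4*b+10) :
    ∑ r ∈ Finset.Icc 1 (4*b+8), (G (4*b+10) r c : ℤ)
      = (2*b+4)*(16*(b:ℤ)^2+80*b+101) := by
  rw [sum_pairs' _ _ (2*b+4) (by omega)]
  rcases (show (c % 2 = 1 ∧ c ≤ 2*b+3) ∨ (c % 2 = 0 ∧ c ≤ 2*b+4) ∨ c = 2*b+5 ∨ c = 2*b+6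
      ∨ (c % 2 = 0 ∧ 2*b+8 ≤ c) ∨ (c % 2 = 1 ∧ 2*b+7 ≤ c) from by omega) with
    ⟨p1,p2⟩ | ⟨p1,p2⟩ | p | p | ⟨p1,p2⟩ | ⟨p1,p2⟩
  · rw [Finset.sum_congr rfl fun j hj =>
      col_pair_A b c j p1 p2 (by have := Finset.mem_range.1 hj; omega)]
    have g := sum_linear (16*(b:ℤ)^2+76*b+95) 4 (2*b+4)
    rw [Finset.sum_congr rfl (fun j _ => by push_cast; ring_nf :
      ∀ j ∈ range (2*b+4), (16*(b:ℤ)^2+76*b+95+4*j) = (16*(b:ℤ)^2+76*b+95) + 4*j)] 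
    push_cast at g ⊢
    linarith
  · rw [Finset.sum_congr rfl fun j hj =>
      col_pair_B b c j p1 (by omega) p2 (by have := Finset.mem_range.1 hj; omega)]
    have g := sum_linear (16*(b:ℤ)^2+84*b+107) (-4) (2*b+4)
    rw [Finset.sum_congr rfl (fun j _ => by push_cast; ring_nf :
      ∀ j ∈ range (2*b+4), (16*(b:ℤ)^2+84*b+107-4*j) = (16*(b:ℤ)^2+84*b+107) + (-4)*j)]
    push_cast at g ⊢
    linarith
  · subst p
    rw [Finset.sum_congr rfl fun j hj =>
      col_pair_C b j (by have := Finset.mem_range.1 hj; omega)]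
    rw [split2' _ _ (b+2) (b+2) (by omega)]
    rw [Finset.sum_congr rfl (fun j hj => if_pos (by have := Finset.mem_range.1 hj; omega) :
      ∀ j ∈ range (b+2), (if j ≤ b+1 then 16*(b:ℤ)^2+80*b+100 else 16*(b:ℤ)^2+80*b+102)
        = 16*(b:ℤ)^2+80*b+100)]
    rw [Finset.sum_congr rfl (fun j hj => if_neg (by have := Finset.mem_range.1 hj; omega) :
      ∀ j ∈ range (b+2), (if b+2+j ≤ b+1 then 16*(b:ℤ)^2+80*b+100 else 16*(b:ℤ)^2+80*b+102)
        = 16*(b:ℤ)^2+80*b+102)]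
    rw [Finset.sum_const, Finset.sum_const, Finset.card_range]
    push_cast
    ring
  · subst p
    rw [Finset.sum_congr rfl fun j hj =>
      col_pair_D b j (by have := Finset.mem_range.1 hj; omega)]
    rw [split2' _ _ (b+2) (b+2) (by omega)]
    rw [Finset.sum_congr rfl (fun j hj => if_pos (by have := Finset.mem_range.1 hj; omega) :
      ∀ j ∈ range (b+2), (if j ≤ b+1 then 16*(b:ℤ)^2+80*b+102 else 16*(b:ℤ)^2+80*b+100)
        = 16*(b:ℤ)^2+80*b+102)]
    rw [Finset.sum_congr rfl (fun j hj => if_neg (by have := Finset.mem_range.1 hj; omega) :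
      ∀ j ∈ range (b+2), (if b+2+j ≤ b+1 then 16*(b:ℤ)^2+80*b+102 else 16*(b:ℤ)^2+80*b+100)
        = 16*(b:ℤ)^2+80*b+100)]
    rw [Finset.sum_const, Finset.sum_const, Finset.card_range]
    push_cast
    ring
  · rw [Finset.sum_congr rfl fun j hj =>
      col_pair_E b c j p1 p2 h2 (by have := Finset.mem_range.1 hj; omega)]
    have g := sum_linear (16*(b:ℤ)^2+76*b+95) 4 (2*b+4)
    rw [Finset.sum_congr rfl (fun j _ => by push_cast; ring_nf :
      ∀ j ∈ range (2*b+4), (16*(b:ℤ)^2+76*b+95+4*j) = (16*(b:ℤ)^2+76*b+95) + 4*j)]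
    push_cast at g ⊢
    linarith
  · rw [Finset.sum_congr rfl fun j hj =>
      col_pair_F b c j p1 p2 h2 (by have := Finset.mem_range.1 hj; omega)]
    have g := sum_linear (16*(b:ℤ)^2+84*b+107) (-4) (2*b+4)
    rw [Finset.sum_congr rfl (fun j _ => by push_cast; ring_nf :
      ∀ j ∈ range (2*b+4), (16*(b:ℤ)^2+84*b+107-4*j) = (16*(b:ℤ)^2+84*b+107) + (-4)*j)]
    push_cast at g ⊢
    linarith

end ColSum
section DiagSum
open Finset

lemma diag_pair (b j : ℕ) (hj : j ≤ 2*b+3) :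
    (G (4*b+10) (2*j+1) (2*j+2) : ℤ) + (G (4*b+10) (2*j+2) (2*j+3) : ℤ)
      = if j ≤ b then 16*(b:ℤ)^2+76*b+94
        else if j = b+1 then 16*(b:ℤ)^2+76*b+95
        else 16*(b:ℤ)^2+84*b+108 := by
  rcases (show j ≤ b ∨ j = b+1 ∨ (b+2 ≤ j ∧ j ≤ 2*b+3) from by omega) with h | h | ⟨h, h'⟩
  · rw [if_pos h]
    rw [G_stay b (2*j+1) _ (by omega), G_swap b (2*j+2) _ (by omega) (by omega)]
    rw [B'_left_even b (2*j+1) (2*j+2) (by omega) (by omega) (by omega) (by omega),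
        B'_right_odd b (2*j+2) (4*b+11-(2*j+3)) (2*j+3) (by omega) (by omega) (by omega) (by omega)]
    push_cast
    ring
  · subst h
    rw [if_neg (by omega), if_pos rfl,
        show 2*(b+1)+1 = 2*b+3 from by omega, show 2*(b+1)+2 = 2*b+4 from by omega,
        show 2*(b+1)+3 = 2*b+5 from by omega]
    rw [G_stay b (2*b+3) _ (by omega), G_swap b (2*b+4) _ (by omega) (by omega)]
    have e2 : 4*b+11-(2*b+5) = 2*b+6 := by omega
    rw [e2, B'_left_even b (2*b+3) (2*b+4) (by omega) (by omega) (by omega) (by omega),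
        B'_mid_right b (2*b+4) (by omega)]
    push_cast
    ring
  · rw [if_neg (by omega), if_neg (by omega)]
    rw [G_swap b (2*j+1) _ (by omega) (by omega), G_stay b (2*j+2) _ (by omega)]
    have e2 : 4*b+11-(2*j+2) = 4*b+9-2*j := by omega
    rw [e2, B'_left_odd b (2*j+1) (4*b+9-2*j) (by omega) (by omega) (by omega),
        B'_right_even b (2*j+2) (2*j+3) (4*b+8-2*j) (by omega) (by omega) (by omega) (by omega)
          (by omega)]
    have c1 : ((4*b+9-2*j : ℕ) : ℤ) = 4*b+9-2*j := by omega
    have c2 : ((4*b+8-2*j : ℕ) : ℤ) = 4*b+8-2*j := by omega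
    rw [c1, c2]
    push_cast
    ring

lemma anti_pair (b j : ℕ) (hj : j ≤ 2*b+3) :
    (G (4*b+10) (2*j+1) (4*b+9-2*j) : ℤ) + (G (4*b+10) (2*j+2) (4*b+8-2*j) : ℤ)
      = if j ≤ b+1 then 16*(b:ℤ)^2+84*b+110
        else if j = b+2 then 16*(b:ℤ)^2+76*b+91
        else 16*(b:ℤ)^2+76*b+92 := by
  rcases (show j ≤ b+1 ∨ j = b+2 ∨ (b+3 ≤ j ∧ j ≤ 2*b+3) from by omega) with h | h | ⟨h, h'⟩
  · rw [if_pos h]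
    rw [G_stay b (2*j+1) _ (by omega), G_swap b (2*j+2) _ (by omega) (by omega)]
    have e2 : 4*b+11-(4*b+8-2*j) = 2*j+3 := by omega
    rw [e2, B'_right_even b (2*j+1) (4*b+9-2*j) (2*j+2) (by omega) (by omega) (by omega)
          (by omega) (by omega),
        B'_left_odd b (2*j+2) (2*j+3) (by omega) (by omega) (by omega)]
    push_cast
    ring
  · subst h
    rw [if_neg (by omega), if_pos rfl,
        show 2*(b+2)+1 = 2*b+5 from by omega, show 2*(b+2)+2 = 2*b+6 from by omega,
        show 4*b+9-2*(b+2) = 2*b+5 from by omega, show 4*b+8-2*(b+2) = 2*b+4 from by omega]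
    rw [G_swap b (2*b+5) _ (by omega) (by omega), G_stay b (2*b+6) _ (by omega)]
    have e1 : 4*b+11-(2*b+5) = 2*b+6 := by omega
    rw [e1, B'_mid_right b (2*b+5) (by omega),
        B'_left_even b (2*b+6) (2*b+4) (by omega) (by omega) (by omega) (by omega)]
    push_cast
    ring
  · rw [if_neg (by omega), if_neg (by omega)]
    rw [G_swap b (2*j+1) _ (by omega) (by omega), G_stay b (2*j+2) _ (by omega)]
    have e1 : 4*b+11-(4*b+9-2*j) = 2*j+2 := by omega
    rw [e1, B'_right_odd b (2*j+1) (2*j+2) (4*b+9-2*j) (by omega) (by omega) (by omega) (by omega),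
        B'_left_even b (2*j+2) (4*b+8-2*j) (by omega) (by omega) (by omega) (by omega)]
    have c1 : ((4*b+9-2*j : ℕ) : ℤ) = 4*b+9-2*j := by omega
    have c2 : ((4*b+8-2*j : ℕ) : ℤ) = 4*b+8-2*j := by omega
    rw [c1, c2]
    push_cast
    ring

lemma inner_diag_sum (b : ℕ) :
    ∑ x ∈ Finset.Icc 1 (4*b+8), (G (4*b+10) x (x+1) : ℤ)
      = (2*b+4)*(16*(b:ℤ)^2+80*b+100) + 2*b+5 := by
  rw [sum_pairs' _ _ (2*b+4) (by omega)]
  have hcg : ∀ j ∈ range (2*b+4),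
      ((G (4*b+10) (2*j+1) (2*j+1+1) : ℤ) + (G (4*b+10) (2*j+2) (2*j+2+1) : ℤ))
      = (if j ≤ b then 16*(b:ℤ)^2+76*b+94
        else if j = b+1 then 16*(b:ℤ)^2+76*b+95
        else 16*(b:ℤ)^2+84*b+108) := by
    intro j hj
    have e1 : 2*j+1+1 = 2*j+2 := by omega
    have e2 : 2*j+2+1 = 2*j+3 := by omega
    rw [e1, e2]
    exact diag_pair b j (by have := Finset.mem_range.1 hj; omega)
  rw [Finset.sum_congr rfl hcg]
  rw [split3' _ _ (b+1) 1 (b+2) (by omega)]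
  rw [Finset.sum_congr rfl (fun j hj => if_pos (by have := Finset.mem_range.1 hj; omega) :
    ∀ j ∈ range (b+1), _ = 16*(b:ℤ)^2+76*b+94)]
  rw [Finset.sum_range_one, if_neg (by omega), if_pos (by omega)]
  rw [Finset.sum_congr rfl (fun j hj => by
      rw [if_neg (by omega), if_neg (by omega)] :
    ∀ j ∈ range (b+2), _ = 16*(b:ℤ)^2+84*b+108)]
  rw [Finset.sum_const, Finset.sum_const, Finset.card_range, Finset.card_range]
  push_cast
  ring

lemma inner_anti_sum (b : ℕ) :
    ∑ x ∈ Finset.Icc 1 (4*b+8), (G (4*b+10) x (4*b+10-x) : ℤ)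
      = (2*b+4)*(16*(b:ℤ)^2+80*b+100) + 2*b+3 := by
  rw [sum_pairs' _ _ (2*b+4) (by omega)]
  have hcg : ∀ j ∈ range (2*b+4),
      ((G (4*b+10) (2*j+1) (4*b+10-(2*j+1)) : ℤ) + (G (4*b+10) (2*j+2) (4*b+10-(2*j+2)) : ℤ))
      = (if j ≤ b+1 then 16*(b:ℤ)^2+84*b+110
        else if j = b+2 then 16*(b:ℤ)^2+76*b+91
        else 16*(b:ℤ)^2+76*b+92) := by
    intro j hj
    have hj' := Finset.mem_range.1 hj
    have e1 : 4*b+10-(2*j+1) = 4*b+9-2*j := by omega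
    have e2 : 4*b+10-(2*j+2) = 4*b+8-2*j := by omega
    rw [e1, e2]
    exact anti_pair b j (by omega)
  rw [Finset.sum_congr rfl hcg]
  rw [split3' _ _ (b+2) 1 (b+1) (by omega)]
  rw [Finset.sum_congr rfl (fun j hj => if_pos (by have := Finset.mem_range.1 hj; omega) :
    ∀ j ∈ range (b+2), _ = 16*(b:ℤ)^2+84*b+110)]
  rw [Finset.sum_range_one, if_neg (by omega), if_pos (by omega)]
  rw [Finset.sum_congr rfl (fun j hj => by
      rw [if_neg (by omega), if_neg (by omega)] :
    ∀ j ∈ range (b+1), _ = 16*(b:ℤ)^2+76*b+92)]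
  rw [Finset.sum_const, Finset.sum_const, Finset.card_range, Finset.card_range]
  push_cast
  ring

end DiagSum
section R1Sum
open Finset

lemma R1_pair0 (b : ℕ) :
    (R1 (4*b+10) 1 : ℤ) + (R1 (4*b+10) 2 : ℤ) = 16*(b:ℤ)^2+76*b+92 := by
  rw [R1_eval b 1 (by omega) (by omega), R1_eval b 2 (by omega) (by omega)]
  rw [if_pos rfl, if_neg (by omega), if_neg (by omega), if_neg (by omega), if_neg (by omega),
      if_pos (by omega)]
  push_cast
  ring

lemma R1_pairA (b j : ℕ) (h1 : 1 ≤ j) (h2 : j ≤ b+2) :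
    (R1 (4*b+10) (2*j+1) : ℤ) + (R1 (4*b+10) (2*j+2) : ℤ) = 16*(b:ℤ)^2+80*b+102 := by
  rw [R1_eval b (2*j+1) (by omega) (by omega), R1_eval b (2*j+2) (by omega) (by omega)]
  rw [if_neg (by omega), if_neg (by omega), if_neg (by omega), if_neg (by omega),
      if_neg (by omega), if_neg (by omega), if_neg (by omega), if_neg (by omega),
      if_neg (by omega), if_pos (by omega)]
  push_cast
  ring

lemma R1_pairB (b : ℕ) :
    (R1 (4*b+10) (2*b+7) : ℤ) + (R1 (4*b+10) (2*b+8) : ℤ) = 16*(b:ℤ)^2+84*b+109 := by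
  rw [R1_eval b (2*b+7) (by omega) (by omega), R1_eval b (2*b+8) (by omega) (by omega)]
  rw [if_neg (by omega), if_neg (by omega), if_pos (by omega), if_neg (by omega),
      if_neg (by omega), if_neg (by omega), if_pos (by omega)]
  push_cast
  ring

lemma R1_pairC (b j : ℕ) (h1 : b+4 ≤ j) (h2 : j ≤ 2*b+4) :
    (R1 (4*b+10) (2*j+1) : ℤ) + (R1 (4*b+10) (2*j+2) : ℤ) = 16*(b:ℤ)^2+80*b+100 := by
  rw [R1_eval b (2*j+1) (by omega) (by omega), R1_eval b (2*j+2) (by omega) (by omega)]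
  rw [if_neg (by omega), if_neg (by omega), if_neg (by omega), if_neg (by omega),
      if_pos (by omega)]
  rcases (show j ≤ 2*b+3 ∨ j = 2*b+4 from by omega) with h | h
  · rw [if_neg (by omega), if_neg (by omega), if_neg (by omega), if_neg (by omega),
        if_neg (by omega)]
    push_cast
    ring
  · subst h
    rw [if_neg (by omega), if_pos (by omega)]
    push_cast
    ring

lemma R1_sum (b : ℕ) :
    ∑ j ∈ Finset.Icc 1 (4*b+10), (R1 (4*b+10) j : ℤ)
      = (2*b+5)*(16*(b:ℤ)^2+80*b+101) := by
  rw [sum_pairs' _ _ (2*b+5) (by omega)]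
  rw [split3' _ _ (b+3) 1 (b+1) (by omega)]
  rw [split2' _ _ 1 (b+2) (by omega)]
  rw [Finset.sum_range_one, Finset.sum_range_one]
  have hA : ∑ j ∈ range (b+2),
      ((R1 (4*b+10) (2*(1+j)+1) : ℤ) + (R1 (4*b+10) (2*(1+j)+2) : ℤ))
      = ∑ _j ∈ range (b+2), (16*(b:ℤ)^2+80*b+102) :=
    Finset.sum_congr rfl fun j hj =>
      R1_pairA b (1+j) (by omega) (by have := mem_range.1 hj; omega)
  have hB : (R1 (4*b+10) (2*(b+3+0)+1) : ℤ) + (R1 (4*b+10) (2*(b+3+0)+2) : ℤ)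
      = 16*(b:ℤ)^2+84*b+109 := by
    rw [show 2*(b+3+0)+1 = 2*b+7 from by omega, show 2*(b+3+0)+2 = 2*b+8 from by omega]
    exact R1_pairB b
  have hC : ∑ j ∈ range (b+1),
      ((R1 (4*b+10) (2*(b+3+1+j)+1) : ℤ) + (R1 (4*b+10) (2*(b+3+1+j)+2) : ℤ))
      = ∑ _j ∈ range (b+1), (16*(b:ℤ)^2+80*b+100) :=
    Finset.sum_congr rfl fun j hj =>
      R1_pairC b (b+4+j) (by omega) (by have := mem_range.1 hj; omega)
  rw [show 2*0+1 = 1 from by omega, show 2*0+2 = 2 from by omega]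
  rw [R1_pair0 b, hA, hB, hC, Finset.sum_const, Finset.sum_const, Finset.card_range,
      Finset.card_range]
  push_cast
  ring

lemma Rn_sum (b : ℕ) :
    ∑ j ∈ Finset.Icc 1 (4*b+10), (Rn (4*b+10) j : ℤ)
      = (2*b+5)*(16*(b:ℤ)^2+80*b+101) := by
  have h : ∀ j ∈ Finset.Icc 1 (4*b+10), (Rn (4*b+10) j : ℤ)
      = 16*(b:ℤ)^2+80*b+101 - (R1 (4*b+10) j : ℤ) := by
    intro j hj
    have := Finset.mem_Icc.1 hj
    exact Rn_eval b j this.1 this.2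
  rw [Finset.sum_congr rfl h, Finset.sum_sub_distrib, R1_sum, Finset.sum_const,
      Nat.card_Icc]
  push_cast
  ring

end R1Sum
section Bounds

lemma B'_bounds (b r c : ℕ) (hr1 : 1 ≤ r) (hr2 : r ≤ 4*b+8) (hc1 : 1 ≤ c) (hc2 : c ≤ 4*b+10) :
    1 ≤ B' (4*b+10) r c ∧ B' (4*b+10) r c ≤ 16*b^2+80*b+100 := by
  have hc := cast_sq b
  rcases (show (c % 2 = 1 ∧ c ≤ 2*b+5) ∨ (c % 2 = 0 ∧ c ≤ 2*b+4) ∨ c = 2*b+6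
      ∨ (2*b+7 ≤ c ∧ (4*b+11-c) % 2 = 1) ∨ (2*b+7 ≤ c ∧ (4*b+11-c) % 2 = 0) from by omega) with
    ⟨p1,p2⟩ | ⟨p1,p2⟩ | p | ⟨p1,p2⟩ | ⟨p1,p2⟩
  · have e := B'_left_odd b r c hc1 p2 p1
    have m1 : (0:ℤ) ≤ ((c:ℤ)-1)*(4*b+8) := mul_nonneg (by omega) (by omega)
    have m2 : ((c:ℤ)-1)*(4*b+8) ≤ (2*b+4)*(4*(b:ℤ)+8) :=
      mul_le_mul_of_nonneg_right (by omega) (by omega)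
    have m3 : (2*(b:ℤ)+4)*(4*(b:ℤ)+8) = 8*(b:ℤ)^2+32*b+32 := by ring
    omega
  · have e := B'_left_even b r c hc1 p2 p1 (by omega)
    have m1 : (1:ℤ)*(4*(b:ℤ)+8) ≤ (c:ℤ)*(4*b+8) :=
      mul_le_mul_of_nonneg_right (by omega) (by omega)
    have m2 : ((c:ℤ))*(4*b+8) ≤ (2*b+4)*(4*(b:ℤ)+8) :=
      mul_le_mul_of_nonneg_right (by omega) (by omega)
    have m3 : (2*(b:ℤ)+4)*(4*(b:ℤ)+8) = 8*(b:ℤ)^2+32*b+32 := by ring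
    have m4 : (1:ℤ)*(4*(b:ℤ)+8) = 4*(b:ℤ)+8 := by ring
    omega
  · subst p
    have e := B'_mid_right b r (by omega)
    omega
  · have e := B'_right_odd b r c (4*b+11-c) (by omega) (by omega) (by omega) p2
    have m1 : (1:ℤ)*(4*(b:ℤ)+8) ≤ ((4*b+11-c : ℕ):ℤ)*(4*b+8) :=
      mul_le_mul_of_nonneg_right (by omega) (by omega)
    have m2 : ((4*b+11-c : ℕ):ℤ)*(4*b+8) ≤ (2*b+4)*(4*(b:ℤ)+8) :=
      mul_le_mul_of_nonneg_right (by omega) (by omega)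
    have m3 : (2*(b:ℤ)+4)*(4*(b:ℤ)+8) = 8*(b:ℤ)^2+32*b+32 := by ring
    have m4 : (1:ℤ)*(4*(b:ℤ)+8) = 4*(b:ℤ)+8 := by ring
    omega
  · have hk2 : 2 ≤ 4*b+11-c := by omega
    have e := B'_right_even b r c (4*b+11-c) (by omega) hk2 (by omega) p2 (by omega)
    have m1 : (0:ℤ) ≤ (((4*b+11-c : ℕ):ℤ)-1)*(4*b+8) :=
      mul_nonneg (by omega) (by omega)
    have m2 : (((4*b+11-c : ℕ):ℤ)-1)*(4*b+8) ≤ (2*b+3)*(4*(b:ℤ)+8) :=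
      mul_le_mul_of_nonneg_right (by omega) (by omega)
    have m3 : (2*(b:ℤ)+3)*(4*(b:ℤ)+8) = 8*(b:ℤ)^2+28*b+24 := by ring
    omega

lemma G_bounds (b r c : ℕ) (hr1 : 1 ≤ r) (hr2 : r ≤ 4*b+8) (hc1 : 1 ≤ c) (hc2 : c ≤ 4*b+10) :
    1 ≤ G (4*b+10) r c ∧ G (4*b+10) r c ≤ 16*b^2+80*b+100 := by
  by_cases hS : S' (4*b+10) r
  · have h := (S'_iff b r).1 hS
    rw [G_swap b r c h hc2]
    exact B'_bounds b r (4*b+11-c) hr1 hr2 (by omega) (by omega)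
  · rw [G_stay b r c (fun hx => hS ((S'_iff b r).2 hx))]
    exact B'_bounds b r c hr1 hr2 hc1 hc2

lemma F'_bounds (b r c : ℕ) (hr1 : 1 ≤ r) (hr2 : r ≤ 4*b+10) (hc1 : 1 ≤ c) (hc2 : c ≤ 4*b+10) :
    1 ≤ F' (4*b+10) r c ∧ F' (4*b+10) r c ≤ 16*b^2+80*b+100 := by
  have hsq : (4*b+10)^2 = 16*b^2+80*b+100 := by ring
  unfold F'
  by_cases h1 : r = 1
  · rw [if_pos h1]
    have := R1_le b c hc1 hc2
    omega
  · rw [if_neg h1]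
    by_cases h2 : r = 4*b+10
    · rw [if_pos h2]
      have h3 := R1_le b c hc1 hc2
      unfold Rn
      omega
    · rw [if_neg h2]
      exact G_bounds b (r-1) c (by omega) (by omega) hc1 hc2

end Bounds
section Surj

-- Band A: low inner values
lemma surj_low (b y : ℕ) (h1 : 1 ≤ y) (h2 : y ≤ 8*b^2+36*b+40) :
    ∃ r c, 1 ≤ r ∧ r ≤ 4*b+8 ∧ 1 ≤ c ∧ c ≤ 4*b+10 ∧ B' (4*b+10) r c = y := by
  obtain ⟨q, s, hdm, hslt⟩ : ∃ q s, (4*b+8)*q + s = y-1 ∧ s < 4*b+8 :=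
    ⟨(y-1)/(4*b+8), (y-1)%(4*b+8), Nat.div_add_mod _ _, Nat.mod_lt _ (by omega)⟩
  have hqle : q ≤ 2*b+4 := by
    by_contra hcon
    have h5 : (4*b+8)*(2*b+5) ≤ (4*b+8)*q := Nat.mul_le_mul_left _ (by omega)
    have h6 : (4*b+8)*(2*b+5) = 8*b^2+36*b+40 := by ring
    omega
  rcases (show q % 2 = 0 ∨ q % 2 = 1 from by omega) with hq2 | hq2
  · refine ⟨s+1, q+1, by omega, by omega, by omega, by omega, ?_⟩
    have e := B'_left_odd b (s+1) (q+1) (by omega) (by omega) (by omega)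
    have e2 : (((q+1:ℕ):ℤ) - 1)*(4*(b:ℤ)+8) = (((4*b+8)*q : ℕ) : ℤ) := by push_cast; ring
    omega
  · refine ⟨4*b+8-s, q+1, by omega, by omega, by omega, by omega, ?_⟩
    have e := B'_left_even b (4*b+8-s) (q+1) (by omega) (by omega) (by omega) (by omega)
    have e2 : ((q+1:ℕ):ℤ)*(4*(b:ℤ)+8) = (((4*b+8)*q : ℕ) : ℤ) + (4*(b:ℤ)+8) := by
      push_cast; ring
    omega

-- Band C: high inner values
lemma surj_high (b y : ℕ) (h1 : 8*b^2+44*b+61 ≤ y) (h2 : y ≤ 16*b^2+80*b+100) :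
    ∃ r c, 1 ≤ r ∧ r ≤ 4*b+8 ∧ 1 ≤ c ∧ c ≤ 4*b+10 ∧ B' (4*b+10) r c = y := by
  obtain ⟨q, s, hdm, hslt⟩ : ∃ q s, (4*b+8)*q + s = 16*b^2+80*b+100 - y ∧ s < 4*b+8 :=
    ⟨_, _, Nat.div_add_mod _ _, Nat.mod_lt _ (by omega)⟩
  have hqle : q ≤ 2*b+4 := by
    by_contra hcon
    have h5 : (4*b+8)*(2*b+5) ≤ (4*b+8)*q := Nat.mul_le_mul_left _ (by omega)
    have h6 : (4*b+8)*(2*b+5) = 8*b^2+36*b+40 := by ring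
    omega
  have hcs := cast_sq b
  rcases (show (q % 2 = 0 ∧ q ≤ 2*b+2) ∨ q = 2*b+4 ∨ q % 2 = 1 from by omega) with
    ⟨p1,p2⟩ | p | p
  · refine ⟨4*b+8-s, 4*b+10-q, by omega, by omega, by omega, by omega, ?_⟩
    have e := B'_right_odd b (4*b+8-s) (4*b+10-q) (q+1) (by omega) (by omega) (by omega)
      (by omega)
    have e2 : ((q+1:ℕ):ℤ)*(4*(b:ℤ)+8) = (((4*b+8)*q : ℕ) : ℤ) + (4*(b:ℤ)+8) := by
      push_cast; ring
    omega
  · subst p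
    refine ⟨s+1, 2*b+6, by omega, by omega, by omega, by omega, ?_⟩
    have e := B'_mid_right b (s+1) (by omega)
    have e2 : (((4*b+8)*(2*b+4) : ℕ) : ℤ) = 8*(b:ℤ)^2+32*b+32 := by push_cast; ring
    omega
  · refine ⟨s+1, 4*b+10-q, by omega, by omega, by omega, by omega, ?_⟩
    have e := B'_right_even b (s+1) (4*b+10-q) (q+1) (by omega) (by omega) (by omega)
      (by omega) (by omega)
    have e2 : (((q+1:ℕ):ℤ)-1)*(4*(b:ℤ)+8) = (((4*b+8)*q : ℕ) : ℤ) := by push_cast; ring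
    omega

end Surj
section SurjMid

lemma surj_mid (b y : ℕ) (h1 : 8*b^2+36*b+41 ≤ y) (h2 : y ≤ 8*b^2+44*b+60) :
    ∃ j, 1 ≤ j ∧ j ≤ 4*b+10 ∧ (R1 (4*b+10) j = y ∨ Rn (4*b+10) j = y) := by
  obtain ⟨t, ht⟩ : ∃ t, y = 8*b^2+36*b+39 + t := ⟨y - (8*b^2+36*b+39), by omega⟩
  have ht1 : 2 ≤ t := by omega
  have ht2 : t ≤ 8*b+21 := by omega
  have hsq : ((4*b+10)^2 : ℕ) = 16*b^2+80*b+100 := by ring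
  have hcs := cast_sq b
  have hRn : ∀ j, 1 ≤ j → j ≤ 4*b+10 → R1 (4*b+10) j = 16*b^2+80*b+101 - y →
      Rn (4*b+10) j = y := by
    intro j hj1 hj2 hr
    unfold Rn
    omega
  rcases (show t = 4*b+12 ∨ t = 4*b+13 ∨ t = 6*b+16 ∨ t = 6*b+15 ∨ t = 4*b+11 ∨ t = 4*b+10
      ∨ t = 2*b+7 ∨ t = 2*b+8
      ∨ (t % 2 = 0 ∧ 2 ≤ t ∧ t ≤ 2*b+6) ∨ (t % 2 = 1 ∧ 2*b+9 ≤ t ∧ t ≤ 4*b+9)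
      ∨ (t % 2 = 1 ∧ 3 ≤ t ∧ t ≤ 2*b+5) ∨ (t % 2 = 0 ∧ 2*b+10 ≤ t ∧ t ≤ 4*b+8)
      ∨ (t % 2 = 0 ∧ 6*b+18 ≤ t ∧ t ≤ 8*b+20) ∨ (t % 2 = 1 ∧ 4*b+15 ≤ t ∧ t ≤ 6*b+13)
      ∨ (t % 2 = 1 ∧ 6*b+17 ≤ t ∧ t ≤ 8*b+21) ∨ (t % 2 = 0 ∧ 4*b+14 ≤ t ∧ t ≤ 6*b+14)
      from by omega) with
    p | p | p | p | p | p | p | p | p | p | p | p | p | p | p | p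
  · refine ⟨1, by omega, by omega, Or.inl ?_⟩
    have e := R1_eval b 1 (by omega) (by omega)
    rw [if_pos rfl] at e
    omega
  · refine ⟨4*b+10, by omega, by omega, Or.inl ?_⟩
    have e := R1_eval b (4*b+10) (by omega) (by omega)
    rw [if_neg (by omega), if_pos rfl] at e
    omega
  · refine ⟨2*b+7, by omega, by omega, Or.inl ?_⟩
    have e := R1_eval b (2*b+7) (by omega) (by omega)
    rw [if_neg (by omega), if_neg (by omega), if_pos rfl] at e
    omega
  · refine ⟨2*b+8, by omega, by omega, Or.inl ?_⟩
    have e := R1_eval b (2*b+8) (by omega) (by omega)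
    rw [if_neg (by omega), if_neg (by omega), if_neg (by omega), if_pos rfl] at e
    omega
  · refine ⟨1, by omega, by omega, Or.inr (hRn 1 (by omega) (by omega) ?_)⟩
    have e := R1_eval b 1 (by omega) (by omega)
    rw [if_pos rfl] at e
    omega
  · refine ⟨4*b+10, by omega, by omega, Or.inr (hRn _ (by omega) (by omega) ?_)⟩
    have e := R1_eval b (4*b+10) (by omega) (by omega)
    rw [if_neg (by omega), if_pos rfl] at e
    omega
  · refine ⟨2*b+7, by omega, by omega, Or.inr (hRn _ (by omega) (by omega) ?_)⟩
    have e := R1_eval b (2*b+7) (by omega) (by omega)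
    rw [if_neg (by omega), if_neg (by omega), if_pos rfl] at e
    omega
  · refine ⟨2*b+8, by omega, by omega, Or.inr (hRn _ (by omega) (by omega) ?_)⟩
    have e := R1_eval b (2*b+8) (by omega) (by omega)
    rw [if_neg (by omega), if_neg (by omega), if_neg (by omega), if_pos rfl] at e
    omega
  · refine ⟨t, by omega, by omega, Or.inl ?_⟩
    have e := R1_eval b t (by omega) (by omega)
    rw [if_neg (by omega), if_neg (by omega), if_neg (by omega), if_neg (by omega),
        if_pos (by omega)] at e
    omega
  · refine ⟨t, by omega, by omega, Or.inl ?_⟩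
    have e := R1_eval b t (by omega) (by omega)
    rw [if_neg (by omega), if_neg (by omega), if_neg (by omega), if_neg (by omega),
        if_pos (by omega)] at e
    omega
  · refine ⟨t, by omega, by omega, Or.inr (hRn _ (by omega) (by omega) ?_)⟩
    have e := R1_eval b t (by omega) (by omega)
    rw [if_neg (by omega), if_neg (by omega), if_neg (by omega), if_neg (by omega),
        if_neg (by omega)] at e
    omega
  · refine ⟨t, by omega, by omega, Or.inr (hRn _ (by omega) (by omega) ?_)⟩
    have e := R1_eval b t (by omega) (by omega)
    rw [if_neg (by omega), if_neg (by omega), if_neg (by omega), if_neg (by omega),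
        if_neg (by omega)] at e
    omega
  · refine ⟨8*b+23-t, by omega, by omega, Or.inl ?_⟩
    have e := R1_eval b (8*b+23-t) (by omega) (by omega)
    rw [if_neg (by omega), if_neg (by omega), if_neg (by omega), if_neg (by omega),
        if_neg (by omega)] at e
    omega
  · refine ⟨8*b+23-t, by omega, by omega, Or.inl ?_⟩
    have e := R1_eval b (8*b+23-t) (by omega) (by omega)
    rw [if_neg (by omega), if_neg (by omega), if_neg (by omega), if_neg (by omega),
        if_neg (by omega)] at e
    omega
  · refine ⟨8*b+23-t, by omega, by omega, Or.inr (hRn _ (by omega) (by omega) ?_)⟩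
    have e := R1_eval b (8*b+23-t) (by omega) (by omega)
    rw [if_neg (by omega), if_neg (by omega), if_neg (by omega), if_neg (by omega),
        if_pos (by omega)] at e
    omega
  · refine ⟨8*b+23-t, by omega, by omega, Or.inr (hRn _ (by omega) (by omega) ?_)⟩
    have e := R1_eval b (8*b+23-t) (by omega) (by omega)
    rw [if_neg (by omega), if_neg (by omega), if_neg (by omega), if_neg (by omega),
        if_pos (by omega)] at e
    omega

end SurjMid
section Final
open Finset

lemma F'_row1 (n c : ℕ) : F' n 1 c = R1 n c := by unfold F'; rw [if_pos rfl]

lemma F'_rown (b c : ℕ) : F' (4*b+10) (4*b+10) c = Rn (4*b+10) c := by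
  unfold F'; rw [if_neg (by omega), if_pos rfl]

lemma F'_inner (b r c : ℕ) (h1 : 2 ≤ r) (h2 : r ≤ 4*b+9) :
    F' (4*b+10) r c = G (4*b+10) (r-1) c := by
  unfold F'; rw [if_neg (by omega), if_neg (by omega)]

lemma split_outer (f : ℕ → ℤ) (b : ℕ) :
    ∑ x ∈ Finset.Icc 1 (4*b+10), f x
      = f 1 + (∑ x ∈ Finset.Icc 1 (4*b+8), f (x+1)) + f (4*b+10) := by
  rw [sum_Icc_to_range, sum_Icc_to_range,
      show 4*b+10+1-1 = 1+(4*b+8)+1 from by omega,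
      show 4*b+8+1-1 = 4*b+8 from by omega,
      split3' _ _ 1 (4*b+8) 1 rfl, Finset.sum_range_one, Finset.sum_range_one,
      show (1:ℕ)+0 = 1 from rfl, show 1+(1+(4*b+8)+0) = 4*b+10 from by omega]
  have h1 : ∀ j ∈ range (4*b+8), f (1+(1+j)) = f (1+j+1) :=
    fun j _ => by rw [show 1+(1+j) = 1+j+1 from by omega]
  rw [Finset.sum_congr rfl h1]

lemma R1_at_1 (b : ℕ) : (R1 (4*b+10) 1 : ℤ) = 8*(b:ℤ)^2+40*b+51 := by
  have e := R1_eval b 1 (by omega) (by omega)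
  rw [if_pos rfl] at e
  exact e

lemma R1_at_n (b : ℕ) : (R1 (4*b+10) (4*b+10) : ℤ) = 8*(b:ℤ)^2+40*b+52 := by
  have e := R1_eval b (4*b+10) (by omega) (by omega)
  rw [if_neg (by omega), if_pos rfl] at e
  exact e

lemma F'_surj (b y : ℕ) (h1 : 1 ≤ y) (h2 : y ≤ 16*b^2+80*b+100) :
    ∃ r c, 1 ≤ r ∧ r ≤ 4*b+10 ∧ 1 ≤ c ∧ c ≤ 4*b+10 ∧ F' (4*b+10) r c = y := by
  rcases (show y ≤ 8*b^2+36*b+40 ∨ (8*b^2+36*b+41 ≤ y ∧ y ≤ 8*b^2+44*b+60)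
      ∨ 8*b^2+44*b+61 ≤ y from by omega) with h | ⟨ha, hb⟩ | h
  · obtain ⟨r0, c0, hr1, hr2, hc1, hc2, hB⟩ := surj_low b y h1 h
    by_cases hS : S' (4*b+10) r0
    · refine ⟨r0+1, 4*b+11-c0, by omega, by omega, by omega, by omega, ?_⟩
      rw [F'_inner b (r0+1) _ (by omega) (by omega), show r0+1-1 = r0 from by omega,
          G_swap b r0 (4*b+11-c0) ((S'_iff b r0).1 hS) (by omega),
          show 4*b+11-(4*b+11-c0) = c0 from by omega]
      exact hB
    · refine ⟨r0+1, c0, by omega, by omega, hc1, hc2, ?_⟩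
      rw [F'_inner b (r0+1) _ (by omega) (by omega), show r0+1-1 = r0 from by omega,
          G_stay b r0 c0 (fun hx => hS ((S'_iff b r0).2 hx))]
      exact hB
  · obtain ⟨j, hj1, hj2, hj⟩ := surj_mid b y ha hb
    rcases hj with hj | hj
    · exact ⟨1, j, by omega, by omega, hj1, hj2, by rw [F'_row1]; exact hj⟩
    · exact ⟨4*b+10, j, by omega, by omega, hj1, hj2, by rw [F'_rown]; exact hj⟩
  · obtain ⟨r0, c0, hr1, hr2, hc1, hc2, hB⟩ := surj_high b y h h2
    by_cases hS : S' (4*b+10) r0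
    · refine ⟨r0+1, 4*b+11-c0, by omega, by omega, by omega, by omega, ?_⟩
      rw [F'_inner b (r0+1) _ (by omega) (by omega), show r0+1-1 = r0 from by omega,
          G_swap b r0 (4*b+11-c0) ((S'_iff b r0).1 hS) (by omega),
          show 4*b+11-(4*b+11-c0) = c0 from by omega]
      exact hB
    · refine ⟨r0+1, c0, by omega, by omega, hc1, hc2, ?_⟩
      rw [F'_inner b (r0+1) _ (by omega) (by omega), show r0+1-1 = r0 from by omega,
          G_stay b r0 c0 (fun hx => hS ((S'_iff b r0).2 hx))]
      exact hB

end Final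
/-- `F'` is a magic square of order `n`: its values on `{1,…,n}²` are exactly the numbers
`1,…,n²` each once, and every row, column and both main diagonals sum to `n(n²+1)/2`. -/
theorem singly_even_is_magic_square (n : ℕ) (h2 : n % 4 = 2) (hn : 10 ≤ n) :
    Set.BijOn (fun rc : ℕ × ℕ => F' n rc.1 rc.2)
      (Set.Icc 1 n ×ˢ Set.Icc 1 n) (Set.Icc 1 (n ^ 2)) ∧
    (∀ r ∈ Finset.Icc 1 n, ∑ c ∈ Finset.Icc 1 n, F' n r c = n * (n ^ 2 + 1) / 2) ∧
    (∀ c ∈ Finset.Icc 1 n, ∑ r ∈ Finset.Icc 1 n, F' n r c = n * (n ^ 2 + 1) / 2) ∧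
    (∑ r ∈ Finset.Icc 1 n, F' n r r = n * (n ^ 2 + 1) / 2) ∧
    (∑ r ∈ Finset.Icc 1 n, F' n r (n + 1 - r) = n * (n ^ 2 + 1) / 2) := by
  obtain ⟨b, rfl⟩ : ∃ b, n = 4*b+10 := ⟨(n-10)/4, by omega⟩
  have hsq : (4*b+10)^2 = 16*b^2+80*b+100 := by ring
  have hM : (4*b+10) * ((4*b+10)^2+1)/2 = (2*b+5)*(16*b^2+80*b+101) := by
    have h : (4*b+10) * ((4*b+10)^2+1) = 2*((2*b+5)*(16*b^2+80*b+101)) := by ring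
    omega
  have hcs := cast_sq b
  refine ⟨?_, ?_, ?_, ?_, ?_⟩
  · -- BijOn
    have himg : (Finset.Icc 1 (4*b+10) ×ˢ Finset.Icc 1 (4*b+10)).image
        (fun rc : ℕ × ℕ => F' (4*b+10) rc.1 rc.2) = Finset.Icc 1 ((4*b+10)^2) := by
      apply Finset.Subset.antisymm
      · intro y hy
        obtain ⟨⟨r, c⟩, hmem, hval⟩ := Finset.mem_image.1 hy
        rw [Finset.mem_product, Finset.mem_Icc, Finset.mem_Icc] at hmem
        replace hval : F' (4*b+10) r c = y := hval
        have hb := F'_bounds b r c hmem.1.1 hmem.1.2 hmem.2.1 hmem.2.2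
        rw [Finset.mem_Icc]
        exact ⟨by omega, by omega⟩
      · intro y hy
        rw [Finset.mem_Icc] at hy
        obtain ⟨r, c, hr1, hr2, hc1, hc2, hval⟩ := F'_surj b y hy.1 (by omega)
        refine Finset.mem_image.2 ⟨(r, c), ?_, hval⟩
        rw [Finset.mem_product, Finset.mem_Icc, Finset.mem_Icc]
        exact ⟨⟨hr1, hr2⟩, hc1, hc2⟩
    have hcard : ((Finset.Icc 1 (4*b+10) ×ˢ Finset.Icc 1 (4*b+10)).image
        (fun rc : ℕ × ℕ => F' (4*b+10) rc.1 rc.2)).card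
        = (Finset.Icc 1 (4*b+10) ×ˢ Finset.Icc 1 (4*b+10)).card := by
      rw [himg, Finset.card_product, Nat.card_Icc, Nat.card_Icc,
          show 4*b+10+1-1 = 4*b+10 from by omega]
      have h' : (4*b+10)*(4*b+10) = (4*b+10)^2 := by ring
      omega
    have hinj := Finset.injOn_of_card_image_eq hcard
    have hcoe : (↑(Finset.Icc 1 (4*b+10) ×ˢ Finset.Icc 1 (4*b+10)) : Set (ℕ × ℕ))
        = Set.Icc 1 (4*b+10) ×ˢ Set.Icc 1 (4*b+10) := by
      rw [Finset.coe_product, Finset.coe_Icc]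
    refine ⟨?_, ?_, ?_⟩
    · intro x hx
      rw [Set.mem_prod, Set.mem_Icc, Set.mem_Icc] at hx
      have hb := F'_bounds b x.1 x.2 hx.1.1 hx.1.2 hx.2.1 hx.2.2
      show F' (4*b+10) x.1 x.2 ∈ Set.Icc 1 ((4*b+10)^2)
      rw [Set.mem_Icc]
      exact ⟨hb.1, by omega⟩
    · rw [← hcoe]
      exact hinj
    · intro y hy
      rw [Set.mem_Icc] at hy
      obtain ⟨r, c, hr1, hr2, hc1, hc2, hval⟩ := F'_surj b y hy.1 (by omega)
      refine ⟨(r, c), ?_, hval⟩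
      rw [Set.mem_prod, Set.mem_Icc, Set.mem_Icc]
      exact ⟨⟨hr1, hr2⟩, hc1, hc2⟩
  · -- row sums
    intro r hr
    rw [Finset.mem_Icc] at hr
    rw [hM]
    have key : ∑ c ∈ Finset.Icc 1 (4*b+10), (F' (4*b+10) r c : ℤ)
        = (2*(b:ℤ)+5)*(16*(b:ℤ)^2+80*b+101) := by
      rcases (show r = 1 ∨ r = 4*b+10 ∨ (2 ≤ r ∧ r ≤ 4*b+9) from by omega) with h | h | ⟨ha, hb'⟩
      · subst h
        rw [Finset.sum_congr rfl (fun c _ => by rw [F'_row1] :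
          ∀ c ∈ Finset.Icc 1 (4*b+10), (F' (4*b+10) 1 c : ℤ) = (R1 (4*b+10) c : ℤ))]
        have := R1_sum b
        push_cast at this ⊢
        linarith
      · subst h
        rw [Finset.sum_congr rfl (fun c _ => by rw [F'_rown] :
          ∀ c ∈ Finset.Icc 1 (4*b+10), (F' (4*b+10) (4*b+10) c : ℤ) = (Rn (4*b+10) c : ℤ))]
        have := Rn_sum b
        push_cast at this ⊢
        linarith
      · rw [Finset.sum_congr rfl (fun c _ => by rw [F'_inner b r c ha hb'] :
          ∀ c ∈ Finset.Icc 1 (4*b+10), (F' (4*b+10) r c : ℤ) = (G (4*b+10) (r-1) c : ℤ))]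
        have := inner_row_sum b (r-1) (by omega) (by omega)
        push_cast at this ⊢
        linarith
    exact_mod_cast key
  · -- column sums
    intro c hc
    rw [Finset.mem_Icc] at hc
    rw [hM]
    have hsplit := split_outer (fun x => (F' (4*b+10) x c : ℤ)) b
    have hmid : ∑ x ∈ Finset.Icc 1 (4*b+8), (F' (4*b+10) (x+1) c : ℤ)
        = (2*(b:ℤ)+4)*(16*(b:ℤ)^2+80*b+101) := by
      rw [Finset.sum_congr rfl (fun x hx => by
          have hx' := Finset.mem_Icc.1 hx
          rw [F'_inner b (x+1) c (by omega) (by omega), show x+1-1 = x from by omega] :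
        ∀ x ∈ Finset.Icc 1 (4*b+8), (F' (4*b+10) (x+1) c : ℤ) = (G (4*b+10) x c : ℤ))]
      have := inner_col_sum b c hc.1 hc.2
      push_cast at this ⊢
      linarith
    have key : ∑ x ∈ Finset.Icc 1 (4*b+10), (F' (4*b+10) x c : ℤ)
        = (2*(b:ℤ)+5)*(16*(b:ℤ)^2+80*b+101) := by
      rw [hsplit, hmid, F'_row1, F'_rown, Rn_eval b c hc.1 hc.2]
      ring
    exact_mod_cast key
  · -- main diagonal
    rw [hM]
    have hsplit := split_outer (fun x => (F' (4*b+10) x x : ℤ)) b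
    have hmid : ∑ x ∈ Finset.Icc 1 (4*b+8), (F' (4*b+10) (x+1) (x+1) : ℤ)
        = (2*(b:ℤ)+4)*(16*(b:ℤ)^2+80*b+100) + 2*b+5 := by
      rw [Finset.sum_congr rfl (fun x hx => by
          have hx' := Finset.mem_Icc.1 hx
          rw [F'_inner b (x+1) (x+1) (by omega) (by omega), show x+1-1 = x from by omega] :
        ∀ x ∈ Finset.Icc 1 (4*b+8), (F' (4*b+10) (x+1) (x+1) : ℤ) = (G (4*b+10) x (x+1) : ℤ))]
      have := inner_diag_sum b
      push_cast at this ⊢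
      linarith
    have key : ∑ x ∈ Finset.Icc 1 (4*b+10), (F' (4*b+10) x x : ℤ)
        = (2*(b:ℤ)+5)*(16*(b:ℤ)^2+80*b+101) := by
      rw [hsplit, hmid, F'_row1, F'_rown, Rn_eval b (4*b+10) (by omega) (by omega),
          R1_at_1, R1_at_n]
      ring
    exact_mod_cast key
  · -- antidiagonal
    rw [hM]
    have hsplit := split_outer (fun x => (F' (4*b+10) x (4*b+10+1-x) : ℤ)) b
    have hmid : ∑ x ∈ Finset.Icc 1 (4*b+8), (F' (4*b+10) (x+1) (4*b+10+1-(x+1)) : ℤ)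
        = (2*(b:ℤ)+4)*(16*(b:ℤ)^2+80*b+100) + 2*b+3 := by
      rw [Finset.sum_congr rfl (fun x hx => by
          have hx' := Finset.mem_Icc.1 hx
          rw [F'_inner b (x+1) _ (by omega) (by omega), show x+1-1 = x from by omega,
              show 4*b+10+1-(x+1) = 4*b+10-x from by omega] :
        ∀ x ∈ Finset.Icc 1 (4*b+8), (F' (4*b+10) (x+1) (4*b+10+1-(x+1)) : ℤ)
          = (G (4*b+10) x (4*b+10-x) : ℤ))]
      have := inner_anti_sum b
      push_cast at this ⊢
      linarith
    have key : ∑ x ∈ Finset.Icc 1 (4*b+10), (F' (4*b+10) x (4*b+10+1-x) : ℤ)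
        = (2*(b:ℤ)+5)*(16*(b:ℤ)^2+80*b+101) := by
      rw [hsplit, hmid, show 4*b+10+1-1 = 4*b+10 from by omega,
          show 4*b+10+1-(4*b+10) = 1 from by omega, F'_row1, F'_rown,
          Rn_eval b 1 (by omega) (by omega), R1_at_1, R1_at_n]
      ring
    exact_mod_cast key
end

section
/- For every column index c ∈ {1,…,n}, the column sum ∑_{r=1}^{n} F'(r,c) equals n(n²+1)/2. -/
/- ---------------- auxiliary lemmas ---------------- -/

lemma filterS_eq (t : ℕ) (ht : 2 ≤ t) :
    (Finset.Icc 1 (4*t)).filter (S' (4*t+2)) =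
      (Finset.range t).image (fun i => 2*i+2) ∪ (Finset.range t).image (fun i => 2*t+2*i+1) := by
  ext x
  simp only [Finset.mem_filter, Finset.mem_Icc, Finset.mem_union, Finset.mem_image,
    Finset.mem_range, S', Nat.even_iff, Nat.odd_iff]
  constructor
  · rintro ⟨h1, (⟨he, hle⟩ | ⟨ho, hlt, hle⟩)⟩
    · exact Or.inl ⟨x/2 - 1, by omega, by omega⟩
    · exact Or.inr ⟨(x - 2*t - 1)/2, by omega, by omega⟩
  · rintro (⟨i, hi, rfl⟩ | ⟨i, hi, rfl⟩) <;> omega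

lemma S_disj (t : ℕ) : Disjoint ((Finset.range t).image (fun i => 2*i+2))
    ((Finset.range t).image (fun i => 2*t+2*i+1)) := by
  simp only [Finset.disjoint_left, Finset.mem_image, Finset.mem_range]
  rintro x ⟨i, hi, rfl⟩ ⟨j, hj, hej⟩
  omega

lemma S_card (t : ℕ) (ht : 2 ≤ t) :
    ((Finset.Icc 1 (4*t)).filter (S' (4*t+2))).card = 2*t := by
  rw [filterS_eq t ht, Finset.card_union_of_disjoint (S_disj t),
    Finset.card_image_of_injective _ (fun a b h => by omega),
    Finset.card_image_of_injective _ (fun a b h => by omega),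
    Finset.card_range]
  ring

lemma S_sum (t : ℕ) (ht : 2 ≤ t) :
    ∑ r ∈ (Finset.Icc 1 (4*t)).filter (S' (4*t+2)), r = 4*(t*t) + t := by
  rw [filterS_eq t ht, Finset.sum_union (S_disj t),
    Finset.sum_image (by intro a _ b _ h; simp only at h; omega),
    Finset.sum_image (by intro a _ b _ h; simp only at h; omega)]
  have h1 : ∑ i ∈ Finset.range t, (2*i+2) = 2 * (∑ i ∈ Finset.range t, i) + 2*t := by
    rw [Finset.sum_add_distrib, ← Finset.mul_sum]; simp [mul_comm]
  have h2 : ∑ i ∈ Finset.range t, (2*t+2*i+1) = 2 * (∑ i ∈ Finset.range t, i) + (2*(t*t) + t) := by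
    rw [show (fun i => 2*t+2*i+1) = (fun i => (2*i) + (2*t+1)) from by funext i; ring]
    rw [Finset.sum_add_distrib, ← Finset.mul_sum]; simp; ring
  have h3 := Finset.sum_range_id_mul_two t
  have h4 : t*(t-1) + t = t*t := by
    cases t with
    | zero => rfl
    | succ s => simp [Nat.succ_sub_one]; ring
  omega

lemma total_sum (t : ℕ) (ht : 2 ≤ t) : ∑ r ∈ Finset.Icc 1 (4*t), r = 8*(t*t) + 2*t := by
  have h : Finset.Icc 1 (4*t) = (Finset.range (4*t)).image (·+1) := by
    ext x
    simp only [Finset.mem_Icc, Finset.mem_image, Finset.mem_range]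
    constructor
    · intro hx; exact ⟨x-1, by omega, by omega⟩
    · rintro ⟨a, ha, rfl⟩; omega
  rw [h, Finset.sum_image (by intro a _ b _ h; simp only at h; omega), Finset.sum_add_distrib]
  have h3 := Finset.sum_range_id_mul_two (4*t)
  have h4 : 4*t*(4*t-1) + 4*t = 16*(t*t) := by
    have h5 : 4*t*(4*t-1) + 4*t*1 = 4*t*(4*t-1+1) := (Nat.mul_add _ _ _).symm
    have h6 : 4*t-1+1 = 4*t := by omega
    rw [h6] at h5
    have h7 : 4*t*(4*t) = 16*(t*t) := by ring
    omega
  simp only [Finset.sum_const, Finset.card_range, smul_eq_mul, mul_one]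
  omega

lemma affine (t c : ℕ) (ht : 2 ≤ t) (hc1 : 1 ≤ c) (hc2 : c ≤ 4*t+2) :
    ∃ a b s u : ℤ, (∀ r : ℕ, 1 ≤ r → r ≤ 4*t →
        (B' (4*t+2) r c : ℤ) = a + s*r ∧ (B' (4*t+2) r (4*t+3-c) : ℤ) = b + u*r)
      ∧ 2*(a+b) + (s+u)*(4*t+1) = 2*((4*t+2:ℤ)^2+1) := by
  have hp : (4*t+2)^2/2 = 8*(t*t)+8*t+2 := by
    rw [show (4*t+2)^2 = 2*(8*(t*t)+8*t+2) from by ring]; omega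
  have hmul : ∀ x : ℕ, x ≤ 2*t → x*(4*t) ≤ 8*(t*t) := by
    intro x hx
    have h1 : x*(4*t) ≤ (2*t)*(4*t) := Nat.mul_le_mul hx le_rfl
    have h2 : (2*t)*(4*t) = 8*(t*t) := by ring
    omega
  rcases lt_trichotomy c (2*t+1) with hlt | heq | hgt
  · -- c ≤ 2t
    rcases Nat.even_or_odd c with hev | hod
    · -- even
      have hcev : c % 2 = 0 := Nat.even_iff.mp hev
      have hc2' : 2 ≤ c := by omega
      refine ⟨(c:ℤ)*(4*t)+1, (16*(t:ℤ)*t+16*t+4) - ((c:ℤ)-1)*(4*t) + 1, -1, -1,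
        fun r hr1 hr2 => ⟨?_, ?_⟩, by push_cast; ring⟩
      · rw [B', if_pos (by omega : c ≤ (4*t+2)/2 - 1),
          if_neg (by simp [Nat.odd_iff]; omega : ¬ Odd c),
          show (4*t+2-2 : ℕ) = 4*t from by omega]
        have hb : r ≤ c*(4*t)+1 := by
          have := Nat.mul_le_mul (show 1 ≤ c by omega) (le_refl (4*t)); omega
        zify [hb]; push_cast; ring
      · rw [B', if_neg (by omega : ¬ (4*t+3-c ≤ (4*t+2)/2 - 1)),
          if_neg (by omega : ¬ (4*t+3-c = (4*t+2)/2)),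
          if_neg (by omega : ¬ (4*t+3-c = (4*t+2)/2 + 1)),
          show 4*t+2+1 - (4*t+3-c) = c from by omega,
          if_neg (by simp [Nat.odd_iff]; omega : ¬ Odd c), hp,
          show (4*t+2-2 : ℕ) = 4*t from by omega]
        have hb1 : (c-1)*(4*t) ≤ 2*(8*(t*t)+8*t+2) := by
          have := hmul (c-1) (by omega); omega
        have hb2 : r ≤ 2*(8*(t*t)+8*t+2) - (c-1)*(4*t) + 1 := by
          have := hmul (c-1) (by omega); omega
        zify [hb1, hb2, show 1 ≤ c from hc1]
        push_cast; ring
    · -- odd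
      have hcod : c % 2 = 1 := Nat.odd_iff.mp hod
      refine ⟨((c:ℤ)-1)*(4*t), (16*(t:ℤ)*t+16*t+4) - (c:ℤ)*(4*t), 1, 1,
        fun r hr1 hr2 => ⟨?_, ?_⟩, by push_cast; ring⟩
      · rw [B', if_pos (by omega : c ≤ (4*t+2)/2 - 1), if_pos hod,
          show (4*t+2-2 : ℕ) = 4*t from by omega]
        zify [show 1 ≤ c from hc1]; push_cast; ring
      · rw [B', if_neg (by omega : ¬ (4*t+3-c ≤ (4*t+2)/2 - 1)),
          if_neg (by omega : ¬ (4*t+3-c = (4*t+2)/2)),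
          if_neg (by omega : ¬ (4*t+3-c = (4*t+2)/2 + 1)),
          show 4*t+2+1 - (4*t+3-c) = c from by omega, if_pos hod, hp,
          show (4*t+2-2 : ℕ) = 4*t from by omega]
        have hb1 : c*(4*t) ≤ 2*(8*(t*t)+8*t+2) := by
          have := hmul c (by omega); omega
        zify [hb1, show c ≤ 4*t+3 from by omega]
        push_cast; ring
  · -- c = 2t+1
    subst heq
    refine ⟨8*(t:ℤ)*t, 8*(t:ℤ)*t+16*t+5, 1, -1,
      fun r hr1 hr2 => ⟨?_, ?_⟩, by push_cast; ring⟩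
    · rw [B', if_neg (by omega : ¬ (2*t+1 ≤ (4*t+2)/2 - 1)),
        if_pos (by omega : 2*t+1 = (4*t+2)/2),
        show (4*t+2)/2 - 1 = 2*t from by omega,
        show (4*t+2-2 : ℕ) = 4*t from by omega,
        show (2*t)*(4*t) = 8*(t*t) from by ring]
      zify; push_cast; ring
    · rw [show 4*t+3-(2*t+1) = 2*t+2 from by omega, B',
        if_neg (by omega : ¬ (2*t+2 ≤ (4*t+2)/2 - 1)),
        if_neg (by omega : ¬ (2*t+2 = (4*t+2)/2)),
        if_pos (by omega : 2*t+2 = (4*t+2)/2 + 1), hp,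
        show (4*t+2)/2 - 1 = 2*t from by omega,
        show (4*t+2-2 : ℕ) = 4*t from by omega,
        show (2*t)*(4*t) = 8*(t*t) from by ring]
      have hb1 : 8*(t*t) ≤ 2*(8*(t*t)+8*t+2) := by omega
      have hb2 : r ≤ 2*(8*(t*t)+8*t+2) - 8*(t*t) + 1 := by omega
      zify [hb1, hb2]; push_cast; ring
  · -- c ≥ 2t+2
    rcases eq_or_lt_of_le (Nat.succ_le_of_lt hgt) with heq2 | hgt2
    · -- c = 2t+2
      have hc : c = 2*t+2 := heq2.symm
      subst hc
      refine ⟨8*(t:ℤ)*t+16*t+5, 8*(t:ℤ)*t, -1, 1,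
        fun r hr1 hr2 => ⟨?_, ?_⟩, by push_cast; ring⟩
      · rw [B', if_neg (by omega : ¬ (2*t+2 ≤ (4*t+2)/2 - 1)),
          if_neg (by omega : ¬ (2*t+2 = (4*t+2)/2)),
          if_pos (by omega : 2*t+2 = (4*t+2)/2 + 1), hp,
          show (4*t+2)/2 - 1 = 2*t from by omega,
          show (4*t+2-2 : ℕ) = 4*t from by omega,
          show (2*t)*(4*t) = 8*(t*t) from by ring]
        have hb1 : 8*(t*t) ≤ 2*(8*(t*t)+8*t+2) := by omega
        have hb2 : r ≤ 2*(8*(t*t)+8*t+2) - 8*(t*t) + 1 := by omega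
        zify [hb1, hb2]; push_cast; ring
      · rw [show 4*t+3-(2*t+2) = 2*t+1 from by omega, B',
          if_neg (by omega : ¬ (2*t+1 ≤ (4*t+2)/2 - 1)),
          if_pos (by omega : 2*t+1 = (4*t+2)/2),
          show (4*t+2)/2 - 1 = 2*t from by omega,
          show (4*t+2-2 : ℕ) = 4*t from by omega,
          show (2*t)*(4*t) = 8*(t*t) from by ring]
        zify; push_cast; ring
    · -- c ≥ 2t+3
      have hc3 : 2*t+3 ≤ c := hgt2
      rcases Nat.even_or_odd c with hev | hod
      · -- c even, so 4t+3-c odd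
        have hcev : c % 2 = 0 := Nat.even_iff.mp hev
        refine ⟨(16*(t:ℤ)*t+16*t+4) - (4*t+3-(c:ℤ))*(4*t), (4*t+3-(c:ℤ)-1)*(4*t), 1, 1,
          fun r hr1 hr2 => ⟨?_, ?_⟩, by push_cast; ring⟩
        · rw [B', if_neg (by omega : ¬ (c ≤ (4*t+2)/2 - 1)),
            if_neg (by omega : ¬ (c = (4*t+2)/2)),
            if_neg (by omega : ¬ (c = (4*t+2)/2 + 1)),
            if_pos (by simp [Nat.odd_iff]; omega : Odd (4*t+2+1-c)), hp,
            show (4*t+2-2 : ℕ) = 4*t from by omega]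
          have hb1 : (4*t+2+1-c)*(4*t) ≤ 2*(8*(t*t)+8*t+2) := by
            have := hmul (4*t+2+1-c) (by omega); omega
          zify [hb1, show c ≤ 4*t+2+1 from by omega]
          push_cast; ring
        · rw [B', if_pos (by omega : 4*t+3-c ≤ (4*t+2)/2 - 1),
            if_pos (by simp [Nat.odd_iff]; omega : Odd (4*t+3-c)),
            show (4*t+2-2 : ℕ) = 4*t from by omega]
          zify [show 1 ≤ 4*t+3-c from by omega, show c ≤ 4*t+3 from by omega]
          push_cast; ring
      · -- c odd, so 4t+3-c even
        have hcod : c % 2 = 1 := Nat.odd_iff.mp hod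
        refine ⟨(16*(t:ℤ)*t+16*t+4) - (4*t+3-(c:ℤ)-1)*(4*t) + 1, (4*t+3-(c:ℤ))*(4*t)+1, -1, -1,
          fun r hr1 hr2 => ⟨?_, ?_⟩, by push_cast; ring⟩
        · rw [B', if_neg (by omega : ¬ (c ≤ (4*t+2)/2 - 1)),
            if_neg (by omega : ¬ (c = (4*t+2)/2)),
            if_neg (by omega : ¬ (c = (4*t+2)/2 + 1)),
            if_neg (by simp [Nat.odd_iff]; omega : ¬ Odd (4*t+2+1-c)), hp,
            show 4*t+2+1-c-1 = 4*t+2-c from by omega,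
            show (4*t+2-2 : ℕ) = 4*t from by omega]
          have hb1 : (4*t+2-c)*(4*t) ≤ 2*(8*(t*t)+8*t+2) := by
            have := hmul (4*t+2-c) (by omega); omega
          have hb2 : r ≤ 2*(8*(t*t)+8*t+2) - (4*t+2-c)*(4*t) + 1 := by
            have := hmul (4*t+2-c) (by omega); omega
          zify [hb1, hb2, show c ≤ 4*t+2 from hc2]
          push_cast; ring
        · rw [B', if_pos (by omega : 4*t+3-c ≤ (4*t+2)/2 - 1),
            if_neg (by simp [Nat.odd_iff]; omega : ¬ Odd (4*t+3-c)),
            show (4*t+2-2 : ℕ) = 4*t from by omega]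
          have hb : r ≤ (4*t+3-c)*(4*t)+1 := by
            have := Nat.mul_le_mul (show 1 ≤ 4*t+3-c from by omega) (le_refl (4*t)); omega
          zify [hb, show c ≤ 4*t+3 from by omega]
          push_cast; ring

lemma R1_le_s16 (t c : ℕ) (ht : 2 ≤ t) (hc1 : 1 ≤ c) (hc2 : c ≤ 4*t+2) :
    R1 (4*t+2) c ≤ (4*t+2)^2 := by
  have hq : (4*t+2)^2 = 16*(t*t)+16*t+4 := by ring
  have hp : (4*t+2)^2/2 = 8*(t*t)+8*t+2 := by omega
  unfold R1
  split_ifs <;> omega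

lemma Rn_cast (t c : ℕ) (ht : 2 ≤ t) (hc1 : 1 ≤ c) (hc2 : c ≤ 4*t+2) :
    (R1 (4*t+2) c : ℤ) + (Rn (4*t+2) c : ℤ) = ((4*t+2:ℤ))^2 + 1 := by
  have h1 := R1_le_s16 t c ht hc1 hc2
  rw [Rn, Nat.cast_sub (by omega)]
  push_cast; ring

/-- Every column of `F'` sums to `n(n²+1)/2`. -/
theorem singly_even_column_sums (n : ℕ) (h2 : n % 4 = 2) (hn : 10 ≤ n) :
    ∀ c ∈ Finset.Icc 1 n, ∑ r ∈ Finset.Icc 1 n, F' n r c = n * (n ^ 2 + 1) / 2 := by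
  intro c hc
  simp only [Finset.mem_Icc] at hc
  obtain ⟨t, rfl⟩ : ∃ t, n = 4*t+2 := ⟨(n-2)/4, by omega⟩
  have ht : 2 ≤ t := by omega
  obtain ⟨a, b, s, u, hab, hid⟩ := affine t c ht hc.1 hc.2
  have hNcard : ((Finset.Icc 1 (4*t)).filter (fun r => ¬ S' (4*t+2) r)).card = 2*t := by
    have h1 := Finset.card_filter_add_card_filter_not
      (s := Finset.Icc 1 (4*t)) (p := S' (4*t+2))
    rw [Nat.card_Icc] at h1
    have hh := S_card t ht
    omega
  have hNsum : ∑ r ∈ (Finset.Icc 1 (4*t)).filter (fun r => ¬ S' (4*t+2) r), r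
      = 4*(t*t) + t := by
    have h1 := Finset.sum_filter_add_sum_filter_not (Finset.Icc 1 (4*t)) (S' (4*t+2))
      (fun r => r)
    have hh := S_sum t ht
    have h3 := total_sum t ht
    rw [hh, h3] at h1
    omega
  have hsplit : Finset.Icc 1 (4*t+2) = insert 1 (insert (4*t+2) (Finset.Icc 2 (4*t+1))) := by
    ext x; simp only [Finset.mem_insert, Finset.mem_Icc]; omega
  rw [hsplit, Finset.sum_insert (by simp only [Finset.mem_insert, Finset.mem_Icc]; omega),
    Finset.sum_insert (by simp only [Finset.mem_Icc]; omega)]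
  have hF1 : F' (4*t+2) 1 c = R1 (4*t+2) c := if_pos rfl
  have hFn : F' (4*t+2) (4*t+2) c = Rn (4*t+2) c := by
    unfold F'; rw [if_neg (by omega), if_pos rfl]
  have hmid : ∑ r ∈ Finset.Icc 2 (4*t+1), F' (4*t+2) r c
      = (∑ r ∈ (Finset.Icc 1 (4*t)).filter (S' (4*t+2)), B' (4*t+2) r (4*t+3-c))
        + ∑ r ∈ (Finset.Icc 1 (4*t)).filter (fun r => ¬ S' (4*t+2) r), B' (4*t+2) r c := by
    have himg : Finset.Icc 2 (4*t+1) = (Finset.Icc 1 (4*t)).image (·+1) := by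
      ext x
      simp only [Finset.mem_Icc, Finset.mem_image]
      constructor
      · intro hx; exact ⟨x-1, by omega, by omega⟩
      · rintro ⟨y, hy, rfl⟩; omega
    rw [himg, Finset.sum_image (by intro x _ y _ h; simp only at h; omega)]
    have hG : ∀ x ∈ Finset.Icc 1 (4*t), F' (4*t+2) (x+1) c = G (4*t+2) x c := by
      intro x hx
      simp only [Finset.mem_Icc] at hx
      unfold F'
      rw [if_neg (by omega), if_neg (by omega), Nat.add_sub_cancel]
    rw [Finset.sum_congr rfl hG,
      ← Finset.sum_filter_add_sum_filter_not (Finset.Icc 1 (4*t)) (S' (4*t+2))]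
    congr 1
    · apply Finset.sum_congr rfl
      intro r hr
      rw [Finset.mem_filter] at hr
      unfold G
      rw [if_pos hr.2, show 4*t+2+1-c = 4*t+3-c from by omega]
    · apply Finset.sum_congr rfl
      intro r hr
      rw [Finset.mem_filter] at hr
      unfold G
      rw [if_neg hr.2]
  rw [hF1, hFn, hmid]
  have hSZ : ((∑ r ∈ (Finset.Icc 1 (4*t)).filter (S' (4*t+2)),
        B' (4*t+2) r (4*t+3-c) : ℕ) : ℤ) = 2*t*b + u*(4*(t*t)+t) := by
    rw [Nat.cast_sum]
    rw [show (∑ r ∈ (Finset.Icc 1 (4*t)).filter (S' (4*t+2)),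
          ((B' (4*t+2) r (4*t+3-c) : ℕ) : ℤ))
        = ∑ r ∈ (Finset.Icc 1 (4*t)).filter (S' (4*t+2)), (b + u*(r:ℤ)) from
      Finset.sum_congr rfl (fun r hr => by
        rw [Finset.mem_filter, Finset.mem_Icc] at hr
        exact (hab r hr.1.1 hr.1.2).2)]
    rw [Finset.sum_add_distrib, Finset.sum_const, ← Finset.mul_sum, S_card t ht,
      ← Nat.cast_sum, S_sum t ht]
    push_cast; ring
  have hNZ : ((∑ r ∈ (Finset.Icc 1 (4*t)).filter (fun r => ¬ S' (4*t+2) r),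
        B' (4*t+2) r c : ℕ) : ℤ) = 2*t*a + s*(4*(t*t)+t) := by
    rw [Nat.cast_sum]
    rw [show (∑ r ∈ (Finset.Icc 1 (4*t)).filter (fun r => ¬ S' (4*t+2) r),
          ((B' (4*t+2) r c : ℕ) : ℤ))
        = ∑ r ∈ (Finset.Icc 1 (4*t)).filter (fun r => ¬ S' (4*t+2) r), (a + s*(r:ℤ)) from
      Finset.sum_congr rfl (fun r hr => by
        rw [Finset.mem_filter, Finset.mem_Icc] at hr
        exact (hab r hr.1.1 hr.1.2).1)]
    rw [Finset.sum_add_distrib, Finset.sum_const, ← Finset.mul_sum, hNcard,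
      ← Nat.cast_sum, hNsum]
    push_cast; ring
  have hRHS : (4*t+2) * ((4*t+2)^2+1) / 2 = (2*t+1) * ((4*t+2)^2+1) := by
    rw [show (4*t+2)*((4*t+2)^2+1) = 2*((2*t+1)*((4*t+2)^2+1)) from by ring]
    exact Nat.mul_div_cancel_left _ (by norm_num)
  rw [hRHS]
  have key : ((R1 (4*t+2) c : ℤ) + ((Rn (4*t+2) c : ℤ)
      + (((∑ r ∈ (Finset.Icc 1 (4*t)).filter (S' (4*t+2)), B' (4*t+2) r (4*t+3-c) : ℕ) : ℤ)
        + ((∑ r ∈ (Finset.Icc 1 (4*t)).filter (fun r => ¬ S' (4*t+2) r),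
            B' (4*t+2) r c : ℕ) : ℤ))))
      = (2*(t:ℤ)+1) * ((4*(t:ℤ)+2)^2+1) := by
    rw [hSZ, hNZ]
    linear_combination (Rn_cast t c ht hc.1 hc.2) + t * hid
  exact_mod_cast key
end

section
/- Both main diagonals of F' have the magic sum: ∑_{r=1}^{n} F'(r,r) = n(n²+1)/2 and ∑_{r=1}^{n} F'(r, n+1−r) = n(n²+1)/2. -/
-- auxiliary lemmas

lemma my_sq (k : ℕ) : (4*k+2)^2 = 16*(k*k)+16*k+4 := by ring

lemma pair_main (k r : ℕ) (hk : 2 ≤ k) (hr2 : 2 ≤ r) (hr : r ≤ 2*k) :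
    F' (4*k+2) r r + F' (4*k+2) (4*k+3-r) (4*k+3-r) = (4*k+2)^2+1 := by
  rcases Nat.even_or_odd r with he | ho
  · -- r = 2j+2, partner 2i+1, i+j = 2k
    rw [Nat.even_iff] at he
    obtain ⟨j, i, hij, hjk, rfl, hpart⟩ :
        ∃ j i, i + j = 2*k ∧ j + 1 ≤ k ∧ r = 2*j+2 ∧ 4*k+3-r = 2*i+1 :=
      ⟨(r-2)/2, (4*k+2-r)/2, by omega, by omega, by omega, by omega⟩
    rw [hpart]
    simp only [F']
    rw [if_neg (by omega : ¬ (2*j+2 = 1)), if_neg (by omega : ¬ (2*j+2 = 4*k+2)),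
      if_neg (by omega : ¬ (2*i+1 = 1)), if_neg (by omega : ¬ (2*i+1 = 4*k+2))]
    rw [show 2*j+2-1 = 2*j+1 by omega, show 2*i+1-1 = 2*i by omega]
    simp only [G]
    rw [if_neg (by simp only [S', Nat.even_iff, Nat.odd_iff]; omega :
          ¬ S' (4*k+2) (2*j+1)),
       if_neg (by simp only [S', Nat.even_iff, Nat.odd_iff]; omega :
          ¬ S' (4*k+2) (2*i))]
    simp only [B']
    rw [if_pos (by omega : 2*j+2 ≤ (4*k+2)/2 - 1),
        if_neg (by simp only [Nat.odd_iff]; omega : ¬ Odd (2*j+2)),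
        if_neg (by omega : ¬ (2*i+1 ≤ (4*k+2)/2 - 1)),
        if_neg (by omega : ¬ (2*i+1 = (4*k+2)/2)),
        if_neg (by omega : ¬ (2*i+1 = (4*k+2)/2 + 1)),
        show 4*k+2+1-(2*i+1) = 2*j+2 by omega,
        if_neg (by simp only [Nat.odd_iff]; omega : ¬ Odd (2*j+2))]
    rw [show 4*k+2-2 = 4*k by omega, show 2*j+2-1 = 2*j+1 by omega]
    simp only [my_sq]
    have e1 : (2*j+2)*(4*k) = 8*(j*k)+8*k := by ring
    have e2 : (2*j+1)*(4*k) = 8*(j*k)+4*k := by ring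
    have e3 : (j+1)*k = j*k+k := by ring
    have e4 : (j+1)*k ≤ k*k := Nat.mul_le_mul_right k hjk
    omega
  · -- r = 2j+3, partner 2i+2, i+j = 2k-1
    rw [Nat.odd_iff] at ho
    obtain ⟨j, i, hij, hjk, rfl, hpart⟩ :
        ∃ j i, i + j + 1 = 2*k ∧ j + 2 ≤ k ∧ r = 2*j+3 ∧ 4*k+3-r = 2*i+2 :=
      ⟨(r-3)/2, (4*k+1-r)/2, by omega, by omega, by omega, by omega⟩
    rw [hpart]
    simp only [F']
    rw [if_neg (by omega : ¬ (2*j+3 = 1)), if_neg (by omega : ¬ (2*j+3 = 4*k+2)),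
      if_neg (by omega : ¬ (2*i+2 = 1)), if_neg (by omega : ¬ (2*i+2 = 4*k+2))]
    rw [show 2*j+3-1 = 2*j+2 by omega, show 2*i+2-1 = 2*i+1 by omega]
    simp only [G]
    rw [if_pos (by simp only [S', Nat.even_iff, Nat.odd_iff]; omega :
          S' (4*k+2) (2*j+2)),
       if_pos (by simp only [S', Nat.even_iff, Nat.odd_iff]; omega :
          S' (4*k+2) (2*i+1))]
    rw [show 4*k+2+1-(2*j+3) = 2*i+2 by omega, show 4*k+2+1-(2*i+2) = 2*j+3 by omega]
    simp only [B']
    rw [if_neg (by omega : ¬ (2*i+2 ≤ (4*k+2)/2 - 1)),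
        if_neg (by omega : ¬ (2*i+2 = (4*k+2)/2)),
        if_neg (by omega : ¬ (2*i+2 = (4*k+2)/2 + 1)),
        show 4*k+2+1-(2*i+2) = 2*j+3 by omega,
        if_pos (by simp only [Nat.odd_iff]; omega : Odd (2*j+3)),
        if_pos (by omega : 2*j+3 ≤ (4*k+2)/2 - 1),
        if_pos (by simp only [Nat.odd_iff]; omega : Odd (2*j+3))]
    rw [show 4*k+2-2 = 4*k by omega, show 2*j+3-1 = 2*j+2 by omega]
    simp only [my_sq]
    have e1 : (2*j+2)*(4*k) = 8*(j*k)+8*k := by ring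
    have e2 : (2*j+3)*(4*k) = 8*(j*k)+12*k := by ring
    have e3 : (j+2)*k = j*k+2*k := by ring
    have e4 : (j+2)*k ≤ k*k := Nat.mul_le_mul_right k hjk
    omega

lemma pair_anti (k r : ℕ) (hk : 2 ≤ k) (hr2 : 2 ≤ r) (hr : r ≤ 2*k) :
    F' (4*k+2) r (4*k+3-r) + F' (4*k+2) (4*k+3-r) r = (4*k+2)^2+1 := by
  rcases Nat.even_or_odd r with he | ho
  · rw [Nat.even_iff] at he
    obtain ⟨j, i, hij, hjk, rfl, hpart⟩ :
        ∃ j i, i + j = 2*k ∧ j + 1 ≤ k ∧ r = 2*j+2 ∧ 4*k+3-r = 2*i+1 :=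
      ⟨(r-2)/2, (4*k+2-r)/2, by omega, by omega, by omega, by omega⟩
    rw [hpart]
    simp only [F']
    rw [if_neg (by omega : ¬ (2*j+2 = 1)), if_neg (by omega : ¬ (2*j+2 = 4*k+2)),
      if_neg (by omega : ¬ (2*i+1 = 1)), if_neg (by omega : ¬ (2*i+1 = 4*k+2))]
    rw [show 2*j+2-1 = 2*j+1 by omega, show 2*i+1-1 = 2*i by omega]
    simp only [G]
    rw [if_neg (by simp only [S', Nat.even_iff, Nat.odd_iff]; omega :
          ¬ S' (4*k+2) (2*j+1)),
       if_neg (by simp only [S', Nat.even_iff, Nat.odd_iff]; omega :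
          ¬ S' (4*k+2) (2*i))]
    simp only [B']
    rw [if_neg (by omega : ¬ (2*i+1 ≤ (4*k+2)/2 - 1)),
        if_neg (by omega : ¬ (2*i+1 = (4*k+2)/2)),
        if_neg (by omega : ¬ (2*i+1 = (4*k+2)/2 + 1)),
        show 4*k+2+1-(2*i+1) = 2*j+2 by omega,
        if_neg (by simp only [Nat.odd_iff]; omega : ¬ Odd (2*j+2)),
        if_pos (by omega : 2*j+2 ≤ (4*k+2)/2 - 1),
        if_neg (by simp only [Nat.odd_iff]; omega : ¬ Odd (2*j+2))]
    rw [show 4*k+2-2 = 4*k by omega, show 2*j+2-1 = 2*j+1 by omega]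
    simp only [my_sq]
    have e1 : (2*j+2)*(4*k) = 8*(j*k)+8*k := by ring
    have e2 : (2*j+1)*(4*k) = 8*(j*k)+4*k := by ring
    have e3 : (j+1)*k = j*k+k := by ring
    have e4 : (j+1)*k ≤ k*k := Nat.mul_le_mul_right k hjk
    omega
  · rw [Nat.odd_iff] at ho
    obtain ⟨j, i, hij, hjk, rfl, hpart⟩ :
        ∃ j i, i + j + 1 = 2*k ∧ j + 2 ≤ k ∧ r = 2*j+3 ∧ 4*k+3-r = 2*i+2 :=
      ⟨(r-3)/2, (4*k+1-r)/2, by omega, by omega, by omega, by omega⟩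
    rw [hpart]
    simp only [F']
    rw [if_neg (by omega : ¬ (2*j+3 = 1)), if_neg (by omega : ¬ (2*j+3 = 4*k+2)),
      if_neg (by omega : ¬ (2*i+2 = 1)), if_neg (by omega : ¬ (2*i+2 = 4*k+2))]
    rw [show 2*j+3-1 = 2*j+2 by omega, show 2*i+2-1 = 2*i+1 by omega]
    simp only [G]
    rw [if_pos (by simp only [S', Nat.even_iff, Nat.odd_iff]; omega :
          S' (4*k+2) (2*j+2)),
       if_pos (by simp only [S', Nat.even_iff, Nat.odd_iff]; omega :
          S' (4*k+2) (2*i+1))]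
    rw [show 4*k+2+1-(2*i+2) = 2*j+3 by omega, show 4*k+2+1-(2*j+3) = 2*i+2 by omega]
    simp only [B']
    rw [if_pos (by omega : 2*j+3 ≤ (4*k+2)/2 - 1),
        if_pos (by simp only [Nat.odd_iff]; omega : Odd (2*j+3)),
        if_neg (by omega : ¬ (2*i+2 ≤ (4*k+2)/2 - 1)),
        if_neg (by omega : ¬ (2*i+2 = (4*k+2)/2)),
        if_neg (by omega : ¬ (2*i+2 = (4*k+2)/2 + 1)),
        show 4*k+2+1-(2*i+2) = 2*j+3 by omega,
        if_pos (by simp only [Nat.odd_iff]; omega : Odd (2*j+3))]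
    rw [show 4*k+2-2 = 4*k by omega, show 2*j+3-1 = 2*j+2 by omega]
    simp only [my_sq]
    have e1 : (2*j+2)*(4*k) = 8*(j*k)+8*k := by ring
    have e2 : (2*j+3)*(4*k) = 8*(j*k)+12*k := by ring
    have e3 : (j+2)*k = j*k+2*k := by ring
    have e4 : (j+2)*k ≤ k*k := Nat.mul_le_mul_right k hjk
    omega

lemma mid_main (k : ℕ) (hk : 2 ≤ k) :
    F' (4*k+2) (2*k+1) (2*k+1) + F' (4*k+2) (2*k+2) (2*k+2) = (4*k+2)^2+2 := by
  simp only [F']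
  rw [if_neg (by omega : ¬ (2*k+1 = 1)), if_neg (by omega : ¬ (2*k+1 = 4*k+2)),
      if_neg (by omega : ¬ (2*k+2 = 1)), if_neg (by omega : ¬ (2*k+2 = 4*k+2))]
  rw [show 2*k+1-1 = 2*k by omega, show 2*k+2-1 = 2*k+1 by omega]
  simp only [G]
  rw [if_pos (by simp only [S', Nat.even_iff, Nat.odd_iff]; omega : S' (4*k+2) (2*k)),
      if_pos (by simp only [S', Nat.even_iff, Nat.odd_iff]; omega : S' (4*k+2) (2*k+1))]
  rw [show 4*k+2+1-(2*k+1) = 2*k+2 by omega, show 4*k+2+1-(2*k+2) = 2*k+1 by omega]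
  simp only [B']
  rw [if_neg (by omega : ¬ (2*k+2 ≤ (4*k+2)/2 - 1)),
      if_neg (by omega : ¬ (2*k+2 = (4*k+2)/2)),
      if_pos (by omega : 2*k+2 = (4*k+2)/2 + 1),
      if_neg (by omega : ¬ (2*k+1 ≤ (4*k+2)/2 - 1)),
      if_pos (by omega : 2*k+1 = (4*k+2)/2)]
  rw [show (4*k+2)/2-1 = 2*k by omega, show 4*k+2-2 = 4*k by omega]
  simp only [my_sq]
  have e1 : (2*k)*(4*k) = 8*(k*k) := by ring
  omega

lemma mid_anti (k : ℕ) (hk : 2 ≤ k) :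
    F' (4*k+2) (2*k+1) (2*k+2) + F' (4*k+2) (2*k+2) (2*k+1) = (4*k+2)^2 := by
  simp only [F']
  rw [if_neg (by omega : ¬ (2*k+1 = 1)), if_neg (by omega : ¬ (2*k+1 = 4*k+2)),
      if_neg (by omega : ¬ (2*k+2 = 1)), if_neg (by omega : ¬ (2*k+2 = 4*k+2))]
  rw [show 2*k+1-1 = 2*k by omega, show 2*k+2-1 = 2*k+1 by omega]
  simp only [G]
  rw [if_pos (by simp only [S', Nat.even_iff, Nat.odd_iff]; omega : S' (4*k+2) (2*k)),
      if_pos (by simp only [S', Nat.even_iff, Nat.odd_iff]; omega : S' (4*k+2) (2*k+1))]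
  rw [show 4*k+2+1-(2*k+2) = 2*k+1 by omega, show 4*k+2+1-(2*k+1) = 2*k+2 by omega]
  simp only [B']
  rw [if_neg (by omega : ¬ (2*k+1 ≤ (4*k+2)/2 - 1)),
      if_pos (by omega : 2*k+1 = (4*k+2)/2),
      if_neg (by omega : ¬ (2*k+2 ≤ (4*k+2)/2 - 1)),
      if_neg (by omega : ¬ (2*k+2 = (4*k+2)/2)),
      if_pos (by omega : 2*k+2 = (4*k+2)/2 + 1)]
  rw [show (4*k+2)/2-1 = 2*k by omega, show 4*k+2-2 = 4*k by omega]
  simp only [my_sq]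
  have e1 : (2*k)*(4*k) = 8*(k*k) := by ring
  omega

lemma R1_one (k : ℕ) : R1 (4*k+2) 1 = (4*k+2)^2/2 + 1 := by
  simp only [R1]; rw [if_true]

lemma R1_top (k : ℕ) (hk : 2 ≤ k) : R1 (4*k+2) (4*k+2) = (4*k+2)^2/2 + 2 := by
  simp only [R1]; rw [if_neg (by omega : ¬ (4*k+2 = 1)), if_true]

lemma F1 (k c : ℕ) : F' (4*k+2) 1 c = R1 (4*k+2) c := by
  simp only [F']; rw [if_true]

lemma Ftop (k c : ℕ) (hk : 2 ≤ k) : F' (4*k+2) (4*k+2) c = Rn (4*k+2) c := by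
  simp only [F']; rw [if_neg (by omega : ¬ (4*k+2 = 1)), if_true]

lemma end_main (k : ℕ) (hk : 2 ≤ k) :
    F' (4*k+2) 1 1 + F' (4*k+2) (4*k+2) (4*k+2) = (4*k+2)^2 := by
  rw [F1, Ftop k _ hk, Rn, R1_one, R1_top k hk, my_sq]
  omega

lemma end_anti (k : ℕ) (hk : 2 ≤ k) :
    F' (4*k+2) 1 (4*k+2) + F' (4*k+2) (4*k+2) 1 = (4*k+2)^2+2 := by
  rw [F1, Ftop k _ hk, Rn, R1_one, R1_top k hk, my_sq]
  omega

lemma sum_split (k : ℕ) (hk : 2 ≤ k) (f : ℕ → ℕ)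
    (hpair : ∀ r, 2 ≤ r → r ≤ 2*k → f r + f (4*k+3-r) = (4*k+2)^2+1)
    (hend : f 1 + f (4*k+2) + (f (2*k+1) + f (2*k+2)) = 2*(4*k+2)^2+2) :
    ∑ r ∈ Finset.Icc 1 (4*k+2), f r = (4*k+2)*((4*k+2)^2+1)/2 := by
  have hIcc : Finset.Icc 1 (4*k+2) = Finset.Ico 1 (4*k+3) := by
    rw [show 4*k+3 = (4*k+2)+1 by omega, Finset.Ico_add_one_right_eq_Icc]
  rw [hIcc, ← Finset.sum_Ico_consecutive f (by omega : 1 ≤ 2*k+2) (by omega : 2*k+2 ≤ 4*k+3)]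
  have hrefl : ∑ r ∈ Finset.Ico (2*k+2) (4*k+3), f r
      = ∑ r ∈ Finset.Ico 1 (2*k+2), f (4*k+3-r) := by
    refine Finset.sum_nbij' (fun r => 4*k+3-r) (fun r => 4*k+3-r) ?_ ?_ ?_ ?_ ?_ <;>
        simp only [Finset.mem_Ico] <;> intro a ha
    · omega
    · omega
    · omega
    · omega
    · congr 1; omega
  rw [hrefl, ← Finset.sum_add_distrib]
  rw [Finset.sum_eq_sum_Ico_succ_bot (by omega : 1 < 2*k+2)]
  rw [show 2*k+2 = (2*k+1)+1 by omega,
      Finset.sum_Ico_succ_top (by omega : 1+1 ≤ 2*k+1)]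
  have hmid : ∑ r ∈ Finset.Ico (1+1) (2*k+1), (f r + f (4*k+3-r))
      = (2*k+1-(1+1)) * ((4*k+2)^2+1) := by
    rw [Finset.sum_congr rfl
        (fun r hr => hpair r (by simp only [Finset.mem_Ico] at hr; omega)
          (by simp only [Finset.mem_Ico] at hr; omega)),
      Finset.sum_const, Nat.card_Ico, smul_eq_mul]
  rw [hmid]
  rw [show 4*k+3-1 = 4*k+2 by omega, show 4*k+3-(2*k+1) = 2*k+2 by omega]
  rw [show (4*k+2)*((4*k+2)^2+1) = ((2*k+1)*((4*k+2)^2+1))*2 by ring,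
      Nat.mul_div_cancel _ (by omega : 0 < 2)]
  have e : (2*k+1-(1+1))*((4*k+2)^2+1) + 2*((4*k+2)^2+1) = (2*k+1)*((4*k+2)^2+1) := by
    rw [← Nat.add_mul]; congr 1; omega
  omega


/-- Both main diagonals of `F'` have the magic sum `n(n²+1)/2`. -/
theorem singly_even_diagonal_sums (n : ℕ) (h2 : n % 4 = 2) (hn : 10 ≤ n) :
    (∑ r ∈ Finset.Icc 1 n, F' n r r = n * (n ^ 2 + 1) / 2) ∧
    (∑ r ∈ Finset.Icc 1 n, F' n r (n + 1 - r) = n * (n ^ 2 + 1) / 2) := by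
  obtain ⟨k, hk, rfl⟩ : ∃ k, 2 ≤ k ∧ n = 4*k+2 := ⟨n/4, by omega, by omega⟩
  constructor
  · exact sum_split k hk (fun r => F' (4*k+2) r r)
      (fun r h1 h2 => pair_main k r hk h1 h2)
      (by rw [end_main k hk, mid_main k hk]; ring)
  · have hc : ∀ r : ℕ, 4*k+2+1-r = 4*k+3-r := fun r => by omega
    simp only [hc]
    exact sum_split k hk (fun r => F' (4*k+2) r (4*k+3-r))
      (fun r h1 h2 => by
        have h3 : 4*k+3-(4*k+3-r) = r := by omega
        simpa only [h3] using pair_anti k r hk h1 h2)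
      (by
        rw [show 4*k+3-1 = 4*k+2 by omega, show 4*k+3-(4*k+2) = 1 by omega,
            show 4*k+3-(2*k+1) = 2*k+2 by omega, show 4*k+3-(2*k+2) = 2*k+1 by omega,
            end_anti k hk, mid_anti k hk]; ring)
end
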